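/- arXiv:0804.1687 — 8 statements merged into one kernel-verified Lean document; each statement's English description precedes it below -/
import Mathlib

section
/- Let K be a field, F a field extension of K (via algebraMap K F), and f ∈ K[x] a polynomial with deg f ≥ 2 that is tame (the characteristic of K does not divide deg f). Then f is indecomposable in K[x] if and only if its image f.map(algebraMap K F) is indecomposable in F[x]. -/
open Polynomial

/-- A polynomial (of degree ≥ 2) is indecomposable if in every functional
decomposition one of the components is linear. -/
def Polynomial.Indecomposable {K : Type*} [Field K] (f : K[X]) : Prop :=
  ∀ g h : K[X], f = g.comp h → g.natDegree = 1 ∨ h.natDegree = 1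

namespace TameIndecAux

variable {K F : Type*} [Field K] [Field F]

/-- If all coefficients of `p` above index `i` lie in a subfield `R`, then the
coefficients of `p ^ (k+1)` above index `k * D + i` lie in `R`, where `D` bounds
the degree of `p`. -/
lemma pow_coeff_mem (R : Subfield F) (p : F[X]) (D i : ℕ) (hD : p.natDegree ≤ D)
    (hp : ∀ l, i < l → p.coeff l ∈ R) :
    ∀ k t, k * D + i < t → (p ^ (k + 1)).coeff t ∈ R := by
  intro k
  induction k with
  | zero =>
    intro t ht
    simpa using hp t (by simpa using ht)
  | succ k ih =>
    intro t ht
    rw [add_mul, one_mul] at ht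
    rw [pow_succ, Polynomial.coeff_mul]
    refine R.sum_mem ?_
    rintro ⟨a, b⟩ hab
    rw [Finset.HasAntidiagonal.mem_antidiagonal] at hab
    simp only at hab ⊢
    by_cases hb : i < b
    · by_cases ha : k * D + i < a
      · exact R.mul_mem (ih a ha) (hp b hb)
      · have hDb : D < b := by omega
        have h0 : p.coeff b = 0 := coeff_eq_zero_of_natDegree_lt (lt_of_le_of_lt hD hDb)
        rw [h0, mul_zero]
        exact R.zero_mem
    · have hdeg : (p ^ (k + 1)).natDegree < a := by
        have h1 : (p ^ (k + 1)).natDegree ≤ (k + 1) * D :=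
          le_trans natDegree_pow_le (Nat.mul_le_mul_left _ hD)
        rw [add_mul, one_mul] at h1
        omega
      rw [coeff_eq_zero_of_natDegree_lt hdeg, zero_mul]
      exact R.zero_mem

/-- Coefficients of a composition `G.comp H` in high degrees are governed by the
top term of `G`. -/
lemma coeff_comp_high (G H : F[X]) {d : ℕ}
    (hd : ∀ k, k < G.natDegree → k * H.natDegree < d) :
    (G.comp H).coeff d = G.leadingCoeff * (H ^ G.natDegree).coeff d := by
  have hGH : G.comp H = ∑ k ∈ Finset.range (G.natDegree + 1), C (G.coeff k) * H ^ k := by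
    rw [comp, eval₂_eq_sum_range]
  rw [hGH, finset_sum_coeff, Finset.sum_range_succ]
  have hz : ∀ k ∈ Finset.range G.natDegree, (C (G.coeff k) * H ^ k).coeff d = 0 := by
    intro k hk
    rw [Finset.mem_range] at hk
    refine coeff_eq_zero_of_natDegree_lt (lt_of_le_of_lt ?_ (hd k hk))
    calc (C (G.coeff k) * H ^ k).natDegree ≤ (H ^ k).natDegree := natDegree_C_mul_le _ _
      _ ≤ k * H.natDegree := natDegree_pow_le
  rw [Finset.sum_eq_zero hz, zero_add, coeff_C_mul, leadingCoeff]

variable (φ : K →+* F)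

/-- Descent of the coefficients of `H` in a composition witnessing `f.map φ`,
assuming `H` monic and the degree of `G` invertible in `F`. -/
lemma coeff_mem_fieldRange (f : K[X]) (G H : F[X]) (hf : f.map φ = G.comp H)
    (hH : H.Monic) (hn : 1 ≤ H.natDegree) {M : ℕ} (hM : G.natDegree = M + 2)
    (hchar : ((M + 2 : ℕ) : F) ≠ 0) :
    ∀ i, 1 ≤ i → H.coeff i ∈ φ.fieldRange := by
  set R : Subfield F := φ.fieldRange with hR
  set n := H.natDegree with hndef
  have hG0 : G ≠ 0 := fun h => by simp [h] at hM
  set T : F[X] := H - X ^ n with hT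
  have hTdeg : T.natDegree ≤ n - 1 := by
    by_cases h0 : T = 0
    · simp [h0]
    · have hlt : T.degree < H.degree := by
        refine degree_sub_lt ?_ hH.ne_zero ?_
        · rw [degree_X_pow, degree_eq_natDegree hH.ne_zero]
        · simp [hH.leadingCoeff]
      have := natDegree_lt_natDegree h0 hlt
      omega
  have hTcoeff : ∀ l, l ≠ n → T.coeff l = H.coeff l := by
    intro l hl
    simp [hT, coeff_X_pow, hl]
  have hXT : H = X ^ n + T := by rw [hT]; ring
  have hHpow : H ^ (M + 2) = ∑ k ∈ Finset.range (M + 2 + 1),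
      X ^ (n * k) * T ^ (M + 2 - k) * C (((M + 2).choose k : F)) := by
    calc H ^ (M + 2) = (X ^ n + T) ^ (M + 2) := by rw [← hXT]
      _ = _ := by
        rw [add_pow]
        refine Finset.sum_congr rfl fun k hk => ?_
        rw [← pow_mul, C_eq_natCast]
  suffices key : ∀ d i, 1 ≤ i → n ≤ i + d → H.coeff i ∈ R by
    intro i hi; exact key n i hi (by omega)
  intro d
  induction d with
  | zero =>
    intro i hi hni
    rcases eq_or_lt_of_le hni with h | h
    · rw [show i = n by omega, hndef, hH.coeff_natDegree]
      exact R.one_mem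
    · rw [coeff_eq_zero_of_natDegree_lt (by omega)]
      exact R.zero_mem
  | succ d ih =>
    intro i hi hni
    by_cases hcase : n ≤ i + d
    · exact ih i hi hcase
    have hilt : i < n := by omega
    have hup : ∀ l, i < l → H.coeff l ∈ R := fun l hl => ih l (by omega) (by omega)
    have hupT : ∀ l, i < l → T.coeff l ∈ R := by
      intro l hl
      by_cases hln : l = n
      · have hz : T.coeff l = 0 := by
          rw [hln, hT, coeff_sub, coeff_X_pow, if_pos rfl, hndef, hH.coeff_natDegree, sub_self]
        rw [hz]; exact R.zero_mem
      · rw [hTcoeff l hln]; exact hup l hl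
    set d' : ℕ := (M + 1) * n + i with hd'
    -- Step A
    have hstepA : (G.comp H).coeff d' = G.leadingCoeff * (H ^ (M + 2)).coeff d' := by
      rw [← hM]
      refine coeff_comp_high G H ?_
      intro k hk
      rw [hM] at hk
      have h1 : k * n ≤ (M + 1) * n := Nat.mul_le_mul_right _ (by omega)
      rw [← hndef]
      omega
    -- Step B
    have hchoose : ((M + 2).choose (M + 1)) = M + 2 := Nat.choose_succ_self_right _
    have htop : ((X : F[X]) ^ (n * (M + 2)) * T ^ (M + 2 - (M + 2))
        * C (((M + 2).choose (M + 2) : F))).coeff d' = 0 := by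
      have e1 : n * (M + 2) = (M + 1) * n + n := by ring
      have hne : d' ≠ n * (M + 2) := by omega
      simp [Nat.sub_self, Nat.choose_self, coeff_X_pow, hne]
    have hmid : ((X : F[X]) ^ (n * (M + 1)) * T ^ (M + 2 - (M + 1))
        * C (((M + 2).choose (M + 1) : F))).coeff d'
        = H.coeff i * ((M + 2 : ℕ) : F) := by
      rw [show M + 2 - (M + 1) = 1 by omega, pow_one, hchoose, coeff_mul_C]
      rw [show d' = i + n * (M + 1) by rw [hd']; ring, coeff_X_pow_mul]
      rw [hTcoeff i (by omega)]
    have hrest : (∑ k ∈ Finset.range (M + 1),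
        ((X : F[X]) ^ (n * k) * T ^ (M + 2 - k) * C (((M + 2).choose k : F))).coeff d') ∈ R := by
      refine R.sum_mem ?_
      intro k hk
      rw [Finset.mem_range] at hk
      rw [coeff_mul_C]
      obtain ⟨j, hj⟩ : ∃ j, M + 1 = j + k := ⟨M + 1 - k, by omega⟩
      have hj1 : 1 ≤ j := by omega
      have e : d' = (j * n + i) + n * k := by rw [hd', hj]; ring
      rw [e, coeff_X_pow_mul]
      refine R.mul_mem ?_ ⟨(((M + 2).choose k : ℕ) : K), map_natCast φ _⟩
      rw [show M + 2 - k = j + 1 by omega]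
      refine pow_coeff_mem R T (n - 1) i hTdeg hupT j _ ?_
      have h2 : j * (n - 1) + j * 1 = j * n := by
        rw [← Nat.mul_add]
        congr 1
        omega
      omega
    have hsplit : (H ^ (M + 2)).coeff d'
        = (∑ k ∈ Finset.range (M + 1),
            ((X : F[X]) ^ (n * k) * T ^ (M + 2 - k) * C (((M + 2).choose k : F))).coeff d')
          + H.coeff i * ((M + 2 : ℕ) : F) := by
      rw [hHpow, finset_sum_coeff, Finset.sum_range_succ, Finset.sum_range_succ, htop,
        add_zero, hmid]
    -- the top coefficient of G
    have hlcG : G.leadingCoeff = φ f.leadingCoeff := by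
      have h1 : (f.map φ).leadingCoeff = φ f.leadingCoeff := leadingCoeff_map φ
      rw [hf, leadingCoeff_comp (by omega), hH.leadingCoeff, one_pow, mul_one] at h1
      exact h1
    have hlcG0 : G.leadingCoeff ≠ 0 := leadingCoeff_ne_zero.2 hG0
    have hS : (H ^ (M + 2)).coeff d' ∈ R := by
      have h1 : φ (f.coeff d') = G.leadingCoeff * (H ^ (M + 2)).coeff d' := by
        rw [← hstepA, ← hf, coeff_map]
      have h2 : (H ^ (M + 2)).coeff d' = G.leadingCoeff⁻¹ * φ (f.coeff d') := by
        rw [h1, ← mul_assoc, inv_mul_cancel₀ hlcG0, one_mul]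
      rw [h2]
      exact R.mul_mem (R.inv_mem ⟨f.leadingCoeff, hlcG.symm⟩) ⟨f.coeff d', rfl⟩
    have hmem : H.coeff i * ((M + 2 : ℕ) : F) ∈ R := by
      have h4 : H.coeff i * ((M + 2 : ℕ) : F)
          = (H ^ (M + 2)).coeff d' - (∑ k ∈ Finset.range (M + 1),
            ((X : F[X]) ^ (n * k) * T ^ (M + 2 - k) * C (((M + 2).choose k : F))).coeff d') := by
        rw [hsplit]; ring
      rw [h4]
      exact R.sub_mem hS hrest
    have h5 : H.coeff i = (H.coeff i * ((M + 2 : ℕ) : F)) * ((M + 2 : ℕ) : F)⁻¹ := by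
      rw [mul_assoc, mul_inv_cancel₀ hchar, mul_one]
    rw [h5]
    exact R.mul_mem hmem (R.inv_mem ⟨((M + 2 : ℕ) : K), map_natCast φ _⟩)

/-- Descent for the outer polynomial of a composition, by repeated division by
the (monic, lifted) inner polynomial. -/
lemma comp_mem_lifts (H : F[X]) (hH : H.Monic) (hn : 1 ≤ H.natDegree) (hHl : H ∈ lifts φ) :
    ∀ N (G : F[X]), G.natDegree ≤ N → G.comp H ∈ lifts φ → G ∈ lifts φ := by
  obtain ⟨H₀, hH₀⟩ := (mem_lifts _).1 hHl
  have hH₀m : H₀.Monic := monic_map_iff.mp (by rw [hH₀]; exact hH)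
  have hdegH : (0 : WithBot ℕ) < H.degree := by
    rw [degree_eq_natDegree hH.ne_zero]
    exact_mod_cast hn
  intro N
  induction N with
  | zero =>
    intro G hG0 hcomp
    rw [eq_C_of_natDegree_le_zero hG0] at hcomp ⊢
    rw [C_comp] at hcomp
    rcases (lifts_iff_coeff_lifts _).1 hcomp 0 with ⟨c₀, hc₀⟩
    exact C'_mem_lifts ⟨c₀, by simpa using hc₀⟩
  | succ N ih =>
    intro G hGN hcomp
    set c := G.coeff 0 with hc
    set q := G.divX with hq
    have hGeq : q * X + C c = G := divX_mul_X_add G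
    have hcompeq : G.comp H = q.comp H * H + C c := by
      rw [← hGeq]
      simp [add_comp, mul_comp, X_comp, C_comp]
    obtain ⟨f₀, hf₀⟩ := (mem_lifts _).1 hcomp
    have hmod : (G.comp H) %ₘ H = C c := by
      rw [hcompeq, add_comm, add_modByMonic, mul_self_modByMonic hH, add_zero]
      exact (modByMonic_eq_self_iff hH).2 (lt_of_le_of_lt degree_C_le hdegH)
    have hcmem : c ∈ Set.range ⇑φ := by
      have h1 : (f₀ %ₘ H₀).map φ = C c := by
        rw [map_modByMonic φ hH₀m, hf₀, hH₀, hmod]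
      exact ⟨(f₀ %ₘ H₀).coeff 0, by rw [← coeff_map, h1, coeff_C_zero]⟩
    obtain ⟨c₀, hc₀⟩ := hcmem
    have hqcomp : q.comp H ∈ lifts φ := by
      have h1 : H * (q.comp H) = (f₀ - C c₀).map φ := by
        rw [Polynomial.map_sub, hf₀, map_C, hc₀, hcompeq]
        ring
      have h2 : ((f₀ - C c₀).map φ) /ₘ H = q.comp H := by
        rw [← h1, mul_divByMonic_cancel_left _ hH]
      rw [mem_lifts]
      exact ⟨(f₀ - C c₀) /ₘ H₀, by rw [map_divByMonic φ hH₀m, hH₀, h2]⟩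
    have hqN : q.natDegree ≤ N := by
      have h3 : q.natDegree = G.natDegree - 1 := natDegree_divX_eq_natDegree_tsub_one
      omega
    obtain ⟨q₀, hq₀⟩ := (mem_lifts _).1 (ih q hqN hqcomp)
    rw [mem_lifts]
    exact ⟨q₀ * X + C c₀, by
      rw [Polynomial.map_add, Polynomial.map_mul, map_X, map_C, hq₀, hc₀, hGeq]⟩

end TameIndecAux

theorem tame_indecomposable_iff_indecomposable_map
    {K F : Type*} [Field K] [Field F] [Algebra K F] (f : K[X])
    (hdeg : 2 ≤ f.natDegree) (htame : ¬ (ringChar K ∣ f.natDegree)) :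
    f.Indecomposable ↔ (f.map (algebraMap K F)).Indecomposable := by
  set φ := algebraMap K F with hφ
  have hinj : Function.Injective ⇑φ := φ.injective
  constructor
  · intro hf G H hGH
    have hNdeg : (f.map φ).natDegree = f.natDegree := natDegree_map φ
    have hmn : G.natDegree * H.natDegree = f.natDegree := by
      rw [← hNdeg, hGH, natDegree_comp]
    have hn1 : 1 ≤ H.natDegree := by
      rcases Nat.eq_zero_or_pos H.natDegree with h | h
      · rw [h, mul_zero] at hmn; omega
      · exact h
    have hm1 : 1 ≤ G.natDegree := by
      rcases Nat.eq_zero_or_pos G.natDegree with h | h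
      · rw [h, zero_mul] at hmn; omega
      · exact h
    by_cases hm2 : G.natDegree = 1
    · exact Or.inl hm2
    right
    have hm : 2 ≤ G.natDegree := by omega
    obtain ⟨M, hM⟩ : ∃ M, G.natDegree = M + 2 := ⟨G.natDegree - 2, by omega⟩
    haveI hcharF : CharP F (ringChar K) := charP_of_injective_ringHom hinj (ringChar K)
    have hmF : ((M + 2 : ℕ) : F) ≠ 0 := by
      intro h0
      rw [CharP.cast_eq_zero_iff F (ringChar K)] at h0
      refine htame ?_
      rw [← hM] at h0
      rw [← hmn]
      exact dvd_mul_of_dvd_left h0 _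
    -- normalize H
    set u := H.leadingCoeff with hu
    have hH0 : H ≠ 0 := fun h => by simp [h] at hn1
    have hu0 : u ≠ 0 := leadingCoeff_ne_zero.2 hH0
    set c := H.coeff 0 with hcdef
    set H₁ := C u⁻¹ * (H - C c) with hH₁
    set G₁ := G.comp (C u * X + C c) with hG₁
    have hlin : (C u * X + C c).natDegree = 1 := natDegree_linear hu0
    have hback : (C u * X + C c).comp H₁ = H := by
      rw [add_comp, mul_comp, C_comp, C_comp, X_comp, hH₁, ← mul_assoc, ← C_mul,
        mul_inv_cancel₀ hu0, C_1, one_mul]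
      ring
    have hcomp₁ : f.map φ = G₁.comp H₁ := by
      rw [hGH, hG₁, comp_assoc, hback]
    have hH₁n : H₁.natDegree = H.natDegree := by
      rw [hH₁, natDegree_C_mul (inv_ne_zero hu0), natDegree_sub_C]
    have hdegHC : (C c).degree < H.degree := by
      refine lt_of_le_of_lt degree_C_le ?_
      rw [degree_eq_natDegree hH0]
      exact_mod_cast hn1
    have hH₁monic : H₁.Monic := by
      rw [Monic, hH₁, leadingCoeff_mul, leadingCoeff_C, leadingCoeff_sub_of_degree_lt hdegHC,
        ← hu]
      exact inv_mul_cancel₀ hu0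
    have hH₁0 : H₁.coeff 0 = 0 := by
      rw [hH₁, coeff_C_mul, coeff_sub, coeff_C]
      simp [← hcdef]
    have hG₁m : G₁.natDegree = G.natDegree := by
      rw [hG₁, natDegree_comp, hlin, mul_one]
    have hG₁M : G₁.natDegree = M + 2 := by rw [hG₁m, hM]
    have hn₁ : 1 ≤ H₁.natDegree := by rw [hH₁n]; exact hn1
    have hH₁lifts : H₁ ∈ lifts φ := by
      rw [lifts_iff_coeff_lifts]
      intro j
      rcases Nat.eq_zero_or_pos j with rfl | hj
      · exact ⟨0, by rw [map_zero, hH₁0]⟩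
      · have := TameIndecAux.coeff_mem_fieldRange φ f G₁ H₁ hcomp₁ hH₁monic hn₁ hG₁M hmF j hj
        rcases RingHom.mem_fieldRange.1 this with ⟨x, hx⟩
        exact ⟨x, hx⟩
    have hG₁lifts : G₁ ∈ lifts φ := by
      refine TameIndecAux.comp_mem_lifts φ H₁ hH₁monic hn₁ hH₁lifts G₁.natDegree G₁ le_rfl ?_
      rw [mem_lifts]
      exact ⟨f, hcomp₁⟩
    obtain ⟨h₁, hh₁⟩ := (mem_lifts _).1 hH₁lifts
    obtain ⟨g₁, hg₁⟩ := (mem_lifts _).1 hG₁lifts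
    have hfeq : f = g₁.comp h₁ := by
      apply Polynomial.map_injective φ hinj
      rw [Polynomial.map_comp, hg₁, hh₁, hcomp₁]
    have hgdeg : g₁.natDegree = G.natDegree := by
      rw [← hG₁m, ← hg₁, natDegree_map]
    have hhdeg : h₁.natDegree = H.natDegree := by
      rw [← hH₁n, ← hh₁, natDegree_map]
    rcases hf g₁ h₁ hfeq with h | h
    · omega
    · omega
  · intro hmap g h hgh
    have := hmap (g.map φ) (h.map φ) (by rw [hgh, Polynomial.map_comp])
    simpa [natDegree_map] using this
end

section
/- Let K be a field and f ∈ K(x) nonconstant with deg f strictly smaller than the cardinality of K (in particular this holds whenever K is infinite). Then there exist units u, v ∈ K(x) such that u∘f∘v is in normal form. -/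
open Polynomial

/-- The degree of a rational function. -/
noncomputable def RatFunc.deg {K : Type*} [Field K] (f : RatFunc K) : ℕ :=
  max f.num.natDegree f.denom.natDegree

/-- Composition of rational functions: `g.comp h = g ∘ h`. -/
noncomputable def RatFunc.comp {K : Type*} [Field K] (g h : RatFunc K) : RatFunc K :=
  (Polynomial.aeval h g.num) / (Polynomial.aeval h g.denom)

/-- A rational function is in normal form if the degree of its numerator is larger than
the degree of its denominator and `0` is a root of the numerator. -/
def RatFunc.IsNormalForm {K : Type*} [Field K] (f : RatFunc K) : Prop :=
  f.denom.natDegree < f.num.natDegree ∧ f.num.eval 0 = 0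

section Aux

variable {K : Type*} [Field K]

lemma aux_num_denom_eq {p q : K[X]} (hc : IsCoprime p q) (hq : q.Monic) :
    (algebraMap K[X] (RatFunc K) p / algebraMap K[X] (RatFunc K) q).num = p ∧
    (algebraMap K[X] (RatFunc K) p / algebraMap K[X] (RatFunc K) q).denom = q := by
  set x := algebraMap K[X] (RatFunc K) p / algebraMap K[X] (RatFunc K) q with hx
  have h1 : x.num * q = p * x.denom := (RatFunc.num_mul_eq_mul_denom_iff hq.ne_zero).mpr hx
  have hd : x.denom = q := by
    refine Polynomial.eq_of_monic_of_associated (RatFunc.monic_denom x) hq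
      (associated_of_dvd_dvd ?_ ?_)
    · exact (RatFunc.isCoprime_num_denom x).symm.dvd_of_dvd_mul_left
        (h1 ▸ dvd_mul_left x.denom p)
    · exact hc.symm.dvd_of_dvd_mul_left (h1 ▸ dvd_mul_left q x.num)
  refine ⟨?_, hd⟩
  apply mul_right_cancel₀ hq.ne_zero
  rw [h1, hd]

lemma aux_exists_eval_ne_zero {p : K[X]} (hp : p ≠ 0)
    (h : (p.natDegree : Cardinal) < Cardinal.mk K) : ∃ b, p.eval b ≠ 0 :=
  Polynomial.exists_eval_ne_zero_of_natDegree_lt_card p hp h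

lemma aux_C_map (a : K) :
    algebraMap K (RatFunc K) a = algebraMap K[X] (RatFunc K) (C a) := by
  rw [RatFunc.algebraMap_C, RatFunc.algebraMap_eq_C]

/-- Evaluating a linear polynomial at `P/Q` and clearing the denominator. -/
lemma aux_aeval_linear (a a' : K) (P Q : K[X]) (hQ : Q ≠ 0) :
    (Polynomial.aeval (algebraMap K[X] (RatFunc K) P / algebraMap K[X] (RatFunc K) Q)
        (C a * X + C a')) * algebraMap K[X] (RatFunc K) Q =
      algebraMap K[X] (RatFunc K) (C a * P + C a' * Q) := by
  have hQne : algebraMap K[X] (RatFunc K) Q ≠ 0 := RatFunc.algebraMap_ne_zero hQ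
  rw [map_add, map_mul, aeval_X, aeval_C, aeval_C, aux_C_map, aux_C_map,
    map_add (algebraMap K[X] (RatFunc K)), map_mul, map_mul]
  all_goals field_simp

/-- The composition of a Möbius transformation with `P/Q`, written with cleared
denominators. -/
lemma aux_comp_div (a a' e e' : K) (P Q : K[X]) (hQ : Q ≠ 0)
    (_hden : C e * P + C e' * Q ≠ 0) :
    (Polynomial.aeval (algebraMap K[X] (RatFunc K) P / algebraMap K[X] (RatFunc K) Q)
        (C a * X + C a')) /
      (Polynomial.aeval (algebraMap K[X] (RatFunc K) P / algebraMap K[X] (RatFunc K) Q)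
        (C e * X + C e')) =
    algebraMap K[X] (RatFunc K) (C a * P + C a' * Q) /
      algebraMap K[X] (RatFunc K) (C e * P + C e' * Q) := by
  have hQne : algebraMap K[X] (RatFunc K) Q ≠ 0 := RatFunc.algebraMap_ne_zero hQ
  rw [← aux_aeval_linear a a' P Q hQ, ← aux_aeval_linear e e' P Q hQ,
    mul_div_mul_right _ _ hQne]

lemma aux_final (g : RatFunc K) (b : K)
    (hdeg : g.denom.natDegree < g.num.natDegree) (hroot : g.num.eval b = 0) :
    (g.comp (algebraMap K[X] (RatFunc K) (X + C b))).IsNormalForm := by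
  have hcomp : g.comp (algebraMap K[X] (RatFunc K) (X + C b)) =
      algebraMap K[X] (RatFunc K) (g.num.comp (X + C b)) /
      algebraMap K[X] (RatFunc K) (g.denom.comp (X + C b)) := by
    unfold RatFunc.comp
    rw [Polynomial.aeval_algebraMap_apply, Polynomial.aeval_algebraMap_apply,
      ← comp_eq_aeval, ← comp_eq_aeval]
  have hcop : IsCoprime (g.num.comp (X + C b)) (g.denom.comp (X + C b)) := by
    have h := (RatFunc.isCoprime_num_denom g).map (Polynomial.aeval (X + C b) :
      K[X] →ₐ[K] K[X]).toRingHom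
    simpa [← comp_eq_aeval] using h
  have hm : (g.denom.comp (X + C b)).Monic := (g.monic_denom).comp_X_add_C b
  obtain ⟨hn, hd⟩ := aux_num_denom_eq hcop hm
  constructor
  · rw [hcomp, hn, hd, natDegree_comp, natDegree_comp, natDegree_X_add_C, mul_one, mul_one]
    exact hdeg
  · rw [hcomp, hn, eval_comp]
    simpa using hroot

lemma aux_stage1 (f : RatFunc K) (hf : 1 ≤ f.deg)
    (hcard : (f.deg : Cardinal) < Cardinal.mk K) :
    ∃ (u : RatFunc K) (b : K), u.deg = 1 ∧
      (u.comp f).denom.natDegree < (u.comp f).num.natDegree ∧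
      (u.comp f).num.eval b = 0 := by
  have hf0 : f ≠ 0 := by
    intro h
    rw [h] at hf
    simp [RatFunc.deg] at hf
  obtain ⟨P, hP⟩ : ∃ P, P = f.num := ⟨_, rfl⟩
  obtain ⟨Q, hQ⟩ : ∃ Q, Q = f.denom := ⟨_, rfl⟩
  have hPQ : IsCoprime P Q := hP ▸ hQ ▸ RatFunc.isCoprime_num_denom f
  have hQm : Q.Monic := hQ ▸ f.monic_denom
  have hP0 : P ≠ 0 := hP ▸ RatFunc.num_ne_zero hf0
  have hfPQ : f = algebraMap K[X] (RatFunc K) P / algebraMap K[X] (RatFunc K) Q := by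
    rw [hP, hQ, RatFunc.num_div_denom f]
  have hQne : algebraMap K[X] (RatFunc K) Q ≠ 0 := RatFunc.algebraMap_ne_zero hQm.ne_zero
  have hdegf : f.deg = max P.natDegree Q.natDegree := by rw [RatFunc.deg, hP, hQ]
  rcases lt_or_ge Q.natDegree P.natDegree with h | h
  · -- numerator degree already bigger
    obtain ⟨b, hb⟩ := aux_exists_eval_ne_zero hQm.ne_zero
      (lt_of_le_of_lt (Nat.cast_le.mpr (hdegf ▸ le_max_right P.natDegree Q.natDegree)) hcard)
    obtain ⟨d, hd⟩ : ∃ d, d = P.eval b / Q.eval b := ⟨_, rfl⟩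
    obtain ⟨A, hA⟩ : ∃ A, A = C (1 : K) * X + C (-d) := ⟨_, rfl⟩
    obtain ⟨N, hNdef⟩ : ∃ N, N = C (1 : K) * P + C (-d) * Q := ⟨_, rfl⟩
    have hNeq : N = P - C d * Q := by
      rw [hNdef]; simp only [map_one, one_mul, map_neg]; ring
    have hcopN : IsCoprime N Q := by
      have h1 := hPQ.add_mul_left_left (-C d)
      have h2 : P + Q * -C d = N := by rw [hNeq]; ring
      rwa [h2] at h1
    have hcopA : IsCoprime A (1 : K[X]) := isCoprime_one_right
    refine ⟨algebraMap K[X] (RatFunc K) A, b, ?_, ?_⟩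
    · have hAeq : A = X - C d := by
        rw [hA]; simp only [map_one, one_mul, map_neg, ← sub_eq_add_neg]
      rw [RatFunc.deg, RatFunc.num_algebraMap, RatFunc.denom_algebraMap, natDegree_one,
        hAeq, natDegree_X_sub_C]
      simp
    have hcomp : (algebraMap K[X] (RatFunc K) A).comp f =
        algebraMap K[X] (RatFunc K) N / algebraMap K[X] (RatFunc K) Q := by
      unfold RatFunc.comp
      rw [RatFunc.num_algebraMap, RatFunc.denom_algebraMap]
      have h1 : Polynomial.aeval f (1 : K[X]) = 1 := map_one _
      rw [h1, div_one, hfPQ, hA, eq_div_iff hQne,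
        aux_aeval_linear 1 (-d) P Q hQm.ne_zero, hNdef]
    obtain ⟨hn, hdd⟩ := aux_num_denom_eq hcopN hQm
    rw [hcomp, hn, hdd]
    have hdegN : N.natDegree = P.natDegree := by
      rw [hNeq]
      exact natDegree_sub_eq_left_of_natDegree_lt (lt_of_le_of_lt (natDegree_C_mul_le d Q) h)
    refine ⟨by rw [hdegN]; exact h, ?_⟩
    rw [hNeq, eval_sub, eval_mul, eval_C, hd, div_mul_cancel₀ _ hb, sub_self]
  · -- numerator degree at most denominator degree
    have hm1 : 1 ≤ Q.natDegree := by
      rw [hdegf, max_eq_right h] at hf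
      exact hf
    obtain ⟨c, hc⟩ : ∃ c, c = if P.natDegree = Q.natDegree then P.leadingCoeff else 0 :=
      ⟨_, rfl⟩
    obtain ⟨R, hRdef⟩ : ∃ R, R = P - C c * Q := ⟨_, rfl⟩
    have hR0 : R ≠ 0 := by
      intro h0
      have h1 : P - C c * Q = 0 := by rw [← hRdef]; exact h0
      have hdvd : Q ∣ P := ⟨C c, by linear_combination h1⟩
      have := natDegree_eq_zero_of_isUnit (hPQ.isUnit_of_dvd' hdvd dvd_rfl)
      omega
    have hRQ : IsCoprime R Q := by
      have h1 := hPQ.add_mul_left_left (-C c)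
      have h2 : P + Q * -C c = R := by rw [hRdef]; ring
      rwa [h2] at h1
    have hRdeg : R.natDegree < Q.natDegree := by
      by_cases hnm : P.natDegree = Q.natDegree
      · have hc' : c = P.leadingCoeff := by rw [hc, if_pos hnm]
        have hcne : c ≠ 0 := by rw [hc']; exact leadingCoeff_ne_zero.mpr hP0
        have hdeq : P.degree = (C c * Q).degree := by
          rw [degree_C_mul hcne, degree_eq_natDegree hP0, degree_eq_natDegree hQm.ne_zero, hnm]
        have hlc : P.leadingCoeff = (C c * Q).leadingCoeff := by
          rw [leadingCoeff_mul, leadingCoeff_C, hQm.leadingCoeff, mul_one, hc']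
        have hlt := degree_sub_lt hdeq hP0 hlc
        rw [← hRdef] at hlt
        have h2 : R.natDegree < P.natDegree := natDegree_lt_natDegree hR0 hlt
        omega
      · have hcz : c = 0 := by rw [hc, if_neg hnm]
        rw [hRdef, hcz, map_zero, zero_mul, sub_zero]
        omega
    obtain ⟨b, hb⟩ := aux_exists_eval_ne_zero hR0
      (lt_of_le_of_lt (Nat.cast_le.mpr (le_trans (le_of_lt hRdeg)
        (hdegf ▸ le_max_right P.natDegree Q.natDegree))) hcard)
    obtain ⟨d, hd⟩ : ∃ d, d = Q.eval b / R.eval b := ⟨_, rfl⟩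
    obtain ⟨N₁, hN₁⟩ : ∃ N₁, N₁ = Q - C d * R := ⟨_, rfl⟩
    have hN₁deg : N₁.natDegree = Q.natDegree := by
      rw [hN₁]
      exact natDegree_sub_eq_left_of_natDegree_lt
        (lt_of_le_of_lt (natDegree_C_mul_le d R) hRdeg)
    have hN₁b : N₁.eval b = 0 := by
      rw [hN₁, eval_sub, eval_mul, eval_C, hd, div_mul_cancel₀ _ hb, sub_self]
    have hN₁R : IsCoprime N₁ R := by
      have h1 := hRQ.symm.add_mul_left_left (-C d)
      have h2 : Q + R * -C d = N₁ := by rw [hN₁]; ring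
      rwa [h2] at h1
    obtain ⟨lR, hlR⟩ : ∃ lR, lR = R.leadingCoeff := ⟨_, rfl⟩
    have hlRne : lR ≠ 0 := hlR ▸ leadingCoeff_ne_zero.mpr hR0
    have hulR : IsUnit (C lR⁻¹ : K[X]) := isUnit_C.mpr (inv_ne_zero hlRne).isUnit
    obtain ⟨N, hN⟩ : ∃ N, N = C lR⁻¹ * N₁ := ⟨_, rfl⟩
    obtain ⟨D, hD⟩ : ∃ D, D = C lR⁻¹ * R := ⟨_, rfl⟩
    have hDm : D.Monic := by
      rw [hD, mul_comm, hlR]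
      exact monic_mul_leadingCoeff_inv hR0
    have hND : IsCoprime N D := by
      rw [hN, hD]
      exact (isCoprime_mul_unit_left hulR N₁ R).mpr hN₁R
    -- the left unit u = (-d·y + (1 + d·c)) / (y - c)
    obtain ⟨A, hA⟩ : ∃ A, A = C (-d) * X + C (1 + d * c) := ⟨_, rfl⟩
    obtain ⟨B, hB⟩ : ∃ B, B = C (1 : K) * X + C (-c) := ⟨_, rfl⟩
    have hBeq : B = X - C c := by
      rw [hB]; simp only [map_one, one_mul, map_neg, ← sub_eq_add_neg]
    have hABcop : IsCoprime A B := by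
      refine ⟨1, C d, ?_⟩
      rw [hA, hB]
      simp only [map_add, map_mul, map_one, map_neg]
      ring
    have hBm : B.Monic := hBeq ▸ monic_X_sub_C c
    obtain ⟨hunum, hudenom⟩ := aux_num_denom_eq hABcop hBm
    refine ⟨algebraMap K[X] (RatFunc K) A / algebraMap K[X] (RatFunc K) B, b, ?_, ?_, ?_⟩
    · rw [RatFunc.deg, hunum, hudenom, hBeq, natDegree_X_sub_C]
      have hA1 : A.natDegree ≤ 1 := by
        rw [hA]
        refine le_trans (natDegree_add_le _ _) (max_le ?_ ?_)
        · exact le_trans (natDegree_C_mul_le _ _) natDegree_X.le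
        · exact le_trans (natDegree_C _).le (by norm_num)
      omega
    all_goals {
      have hBden : C (1 : K) * P + C (-c) * Q ≠ 0 := by
        intro h0
        simp only [map_one, one_mul, map_neg] at h0
        apply hR0
        rw [hRdef]
        linear_combination h0
      have hcomp : (algebraMap K[X] (RatFunc K) A /
          algebraMap K[X] (RatFunc K) B).comp f =
          algebraMap K[X] (RatFunc K) N / algebraMap K[X] (RatFunc K) D := by
        unfold RatFunc.comp
        rw [hunum, hudenom, hfPQ, hA, hB, aux_comp_div (-d) (1 + d * c) 1 (-c) P Q
          hQm.ne_zero hBden]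
        have hRB : C (1 : K) * P + C (-c) * Q = R := by
          rw [hRdef]; simp only [map_one, one_mul, map_neg]; ring
        have hNA : C lR⁻¹ * (C (-d) * P + C (1 + d * c) * Q) = N * 1 +
            (C lR⁻¹ * C (-d) * C (-1)) * (C (1 : K) * P + C (-c) * Q - R) := by
          rw [hN, hN₁, hRdef]
          simp only [map_add, map_mul, map_one, map_neg]
          ring
        rw [hRB] at hNA
        simp only [sub_self, mul_zero, add_zero, mul_one] at hNA
        rw [hRB, ← hNA, hD, map_mul, map_mul,
          mul_div_mul_left _ _ (RatFunc.algebraMap_ne_zero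
            (C_ne_zero.mpr (inv_ne_zero hlRne)))]
      obtain ⟨hn, hdd⟩ := aux_num_denom_eq hND hDm
      first
      | (rw [hcomp, hn, hdd, hN, hD, natDegree_C_mul (inv_ne_zero hlRne),
          natDegree_C_mul (inv_ne_zero hlRne), hN₁deg]
         exact hRdeg)
      | (rw [hcomp, hn, hN, eval_mul, hN₁b, mul_zero])
    }

end Aux

/-- Theorem 4(i): if `deg f` is smaller than the cardinality of `K`, then `f` can be
normalized by composing with units on both sides. -/
theorem exists_units_comp_isNormalForm {K : Type*} [Field K] (f : RatFunc K)
    (hf : 1 ≤ f.deg) (hcard : (f.deg : Cardinal) < Cardinal.mk K) :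
    ∃ u v : RatFunc K, u.deg = 1 ∧ v.deg = 1 ∧ ((u.comp f).comp v).IsNormalForm := by
  obtain ⟨u, b, hu, hdeg, hroot⟩ := aux_stage1 f hf hcard
  refine ⟨u, algebraMap K[X] (RatFunc K) (X + C b), hu, ?_, aux_final _ b hdeg hroot⟩
  unfold RatFunc.deg
  rw [RatFunc.num_algebraMap, RatFunc.denom_algebraMap, natDegree_X_add_C, natDegree_one]
  simp
end

section
/- Let K be a field and f ∈ K(x) in normal form, and suppose f = g∘h with g, h ∈ K(x) nonconstant. Then there exists a unit u ∈ K(x), with compositional inverse u⁻¹, such that g∘u⁻¹ and u∘h are both in normal form and f = (g∘u⁻¹)∘(u∘h). -/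
open Polynomial

namespace NFAux
variable {K : Type*} [Field K]

/-- homogenization of the substitution r(p/q) with total degree m -/
noncomputable def homog (r p q : Polynomial K) (m : ℕ) : Polynomial K :=
  ∑ i ∈ Finset.range (m+1), Polynomial.C (r.coeff i) * p^i * q^(m-i)

theorem homog_map {F : Type*} [Field F] [Algebra K F] (φ : Polynomial K →ₐ[K] F)
    (r p q : Polynomial K) (m : ℕ) (hq : φ q ≠ 0) (hm : r.natDegree ≤ m) :
    φ (homog r p q m) = Polynomial.aeval (φ p / φ q) r * (φ q)^m := by
  rw [homog, map_sum, Polynomial.aeval_eq_sum_range' (Nat.lt_succ_of_le hm), Finset.sum_mul]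
  refine Finset.sum_congr rfl fun i hi => ?_
  rw [Finset.mem_range, Nat.lt_succ_iff] at hi
  rw [map_mul, map_mul, map_pow, map_pow, Algebra.smul_def, div_pow,
    pow_sub₀ _ hq hi, ← Polynomial.algebraMap_eq, AlgHom.commutes]
  field_simp

theorem homog_ne_zero {r p q : Polynomial K} (hcop : IsCoprime p q) (hq : q ≠ 0)
    (hdeg : 1 ≤ max p.natDegree q.natDegree) (hr : r ≠ 0) :
    homog r p q r.natDegree ≠ 0 := by
  intro h0
  set k := r.natDegree with hk
  have hsplit : homog r p q k = (∑ i ∈ Finset.range k, C (r.coeff i) * p^i * q^(k-i))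
      + C (r.coeff k) * p^k := by
    rw [homog, Finset.sum_range_succ, Nat.sub_self, pow_zero, mul_one]
  have hqdvd : q ∣ C (r.coeff k) * p^k := by
    have : q ∣ ∑ i ∈ Finset.range k, C (r.coeff i) * p^i * q^(k-i) := by
      refine Finset.dvd_sum fun i hi => ?_
      rw [Finset.mem_range] at hi
      exact Dvd.dvd.mul_left (dvd_pow_self q (Nat.sub_ne_zero_of_lt hi)) _
    have h2 : C (r.coeff k) * p^k =
        homog r p q k - ∑ i ∈ Finset.range k, C (r.coeff i) * p^i * q^(k-i) := by
      rw [hsplit]; ring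
    rw [h2, h0, zero_sub]
    exact (this).neg_right
  have hrk : r.coeff k ≠ 0 := by
    simpa [hk] using Polynomial.leadingCoeff_ne_zero.mpr hr
  have hqC : q ∣ C (r.coeff k) :=
    (IsCoprime.pow_right hcop.symm).dvd_of_dvd_mul_right hqdvd
  have hqdeg : q.natDegree = 0 := by
    have := Polynomial.natDegree_le_of_dvd hqC (by simpa using hrk)
    simpa using this
  have hpdeg : p.natDegree ≠ 0 := by
    rw [hqdeg] at hdeg; simp at hdeg; omega
  obtain ⟨c, rfl⟩ := Polynomial.natDegree_eq_zero.mp hqdeg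
  have hc : c ≠ 0 := by simpa using hq
  have heq : homog r p (C c) k = (r.scaleRoots c).comp p := by
    rw [Polynomial.comp, Polynomial.eval₂_eq_sum_range, Polynomial.natDegree_scaleRoots,
      homog, ← hk]
    refine Finset.sum_congr rfl fun i hi => ?_
    rw [Polynomial.coeff_scaleRoots, ← hk, map_mul, map_pow]
    ring
  rw [heq] at h0
  have hlc : ((r.scaleRoots c).comp p).leadingCoeff ≠ 0 := by
    rw [Polynomial.leadingCoeff_comp hpdeg]
    refine mul_ne_zero ?_ (pow_ne_zero _ (Polynomial.leadingCoeff_ne_zero.mpr (by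
      intro hp0; rw [hp0] at hpdeg; simp at hpdeg)))
    rw [Polynomial.leadingCoeff, Polynomial.natDegree_scaleRoots,
      Polynomial.coeff_scaleRoots_natDegree]
    exact Polynomial.leadingCoeff_ne_zero.mpr hr
  rw [h0] at hlc; simp at hlc


/-- the algebra map `K[X] → RatFunc K` as an `AlgHom` -/
noncomputable abbrev ι : Polynomial K →ₐ[K] RatFunc K :=
  IsScalarTower.toAlgHom K (Polynomial K) (RatFunc K)

theorem homog_shift (r p q : Polynomial K) {m : ℕ} (hm : r.natDegree ≤ m) (hq : q ≠ 0) :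
    homog r p q m = homog r p q r.natDegree * q^(m - r.natDegree) := by
  have hq' : (ι : Polynomial K →ₐ[K] RatFunc K) q ≠ 0 := RatFunc.algebraMap_ne_zero hq
  apply RatFunc.algebraMap_injective K
  have h1 := homog_map (ι (K := K)) r p q m hq' hm
  have h2 := homog_map (ι (K := K)) r p q r.natDegree hq' le_rfl
  show (ι : Polynomial K →ₐ[K] RatFunc K) _ = ι _
  rw [h1, map_mul, h2, map_pow, mul_assoc, ← pow_add]
  congr 2
  omega

theorem homog_ne_zero' {r p q : Polynomial K} (hcop : IsCoprime p q) (hq : q ≠ 0)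
    (hdeg : 1 ≤ max p.natDegree q.natDegree) (hr : r ≠ 0) {m : ℕ} (hm : r.natDegree ≤ m) :
    homog r p q m ≠ 0 := by
  rw [homog_shift r p q hm hq]
  exact mul_ne_zero (homog_ne_zero hcop hq hdeg hr) (pow_ne_zero _ hq)

theorem aeval_ne_zero {h : RatFunc K} (hh : 1 ≤ h.deg) {r : Polynomial K} (hr : r ≠ 0) :
    Polynomial.aeval h r ≠ 0 := by
  have hq' : (ι : Polynomial K →ₐ[K] RatFunc K) h.denom ≠ 0 :=
    RatFunc.algebraMap_ne_zero h.denom_ne_zero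
  have h1 := homog_map (ι (K := K)) r h.num h.denom r.natDegree hq' le_rfl
  have h2 : (ι : Polynomial K →ₐ[K] RatFunc K) h.num / ι h.denom = h := h.num_div_denom
  rw [h2] at h1
  intro h0
  rw [h0, zero_mul] at h1
  exact homog_ne_zero h.isCoprime_num_denom h.denom_ne_zero hh hr
    (RatFunc.algebraMap_injective K (by simpa using h1))

theorem comp_repr {w : RatFunc K} (hw : 1 ≤ w.deg) {a b : Polynomial K} (hb : b ≠ 0) :
    RatFunc.comp ((algebraMap _ _ a) / (algebraMap _ _ b)) w
      = Polynomial.aeval w a / Polynomial.aeval w b := by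
  set z := (algebraMap (Polynomial K) (RatFunc K) a) / (algebraMap (Polynomial K) (RatFunc K) b)
    with hz
  have key : z.num * b = z.denom * a := by
    apply RatFunc.algebraMap_injective K
    have : (algebraMap (Polynomial K) (RatFunc K)) z.num / algebraMap _ _ z.denom
        = algebraMap _ _ a / algebraMap _ _ b := by rw [z.num_div_denom]
    rw [div_eq_div_iff (RatFunc.algebraMap_ne_zero z.denom_ne_zero)
      (RatFunc.algebraMap_ne_zero hb)] at this
    simpa [map_mul, mul_comm] using this
  have key2 : Polynomial.aeval w z.num * Polynomial.aeval w b
      = Polynomial.aeval w z.denom * Polynomial.aeval w a := by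
    have := congrArg (Polynomial.aeval w) key
    simpa [map_mul] using this
  rw [RatFunc.comp, div_eq_div_iff (aeval_ne_zero hw z.denom_ne_zero) (aeval_ne_zero hw hb)]
  rw [key2]; ring

theorem comp_X_left {h : RatFunc K} (_hh : True) : RatFunc.comp RatFunc.X h = h := by
  rw [RatFunc.comp, RatFunc.num_X, RatFunc.denom_X]
  simp

theorem comp_X_right (g : RatFunc K) : RatFunc.comp g RatFunc.X = g := by
  rw [RatFunc.comp, ← RatFunc.algebraMap_X]
  rw [Polynomial.aeval_algebraMap_apply, Polynomial.aeval_algebraMap_apply]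
  simp [RatFunc.num_div_denom]


theorem comp_eq_repr {h : RatFunc K} (hh : 1 ≤ h.deg) (g : RatFunc K) {m : ℕ}
    (hm : g.deg ≤ m) :
    RatFunc.comp g h = algebraMap _ _ (homog g.num h.num h.denom m)
      / algebraMap _ _ (homog g.denom h.num h.denom m) := by
  have hq' : (ι : Polynomial K →ₐ[K] RatFunc K) h.denom ≠ 0 :=
    RatFunc.algebraMap_ne_zero h.denom_ne_zero
  have hm1 : g.num.natDegree ≤ m := le_trans (le_max_left _ _) hm
  have hm2 : g.denom.natDegree ≤ m := le_trans (le_max_right _ _) hm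
  have h1 := homog_map (ι (K := K)) g.num h.num h.denom m hq' hm1
  have h2 := homog_map (ι (K := K)) g.denom h.num h.denom m hq' hm2
  have hnd : (ι : Polynomial K →ₐ[K] RatFunc K) h.num / ι h.denom = h := h.num_div_denom
  rw [hnd] at h1 h2
  show RatFunc.comp g h = (ι : Polynomial K →ₐ[K] RatFunc K) _ / ι _
  rw [h1, h2, RatFunc.comp, mul_div_mul_right _ _ (pow_ne_zero _ hq')]

theorem repr_factor {f : RatFunc K} {N D : Polynomial K} (hD : D ≠ 0)
    (hf : f = algebraMap _ _ N / algebraMap _ _ D) :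
    ∃ e : Polynomial K, e ≠ 0 ∧ N = f.num * e ∧ D = f.denom * e := by
  have key : f.num * D = f.denom * N := by
    apply RatFunc.algebraMap_injective K
    have : (algebraMap (Polynomial K) (RatFunc K)) f.num / algebraMap _ _ f.denom
        = algebraMap _ _ N / algebraMap _ _ D := by rw [f.num_div_denom, hf]
    rw [div_eq_div_iff (RatFunc.algebraMap_ne_zero f.denom_ne_zero)
      (RatFunc.algebraMap_ne_zero hD)] at this
    simpa [map_mul, mul_comm] using this
  have hdvd : f.denom ∣ D := by
    have h1 : f.denom ∣ f.num * D := ⟨N, key⟩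
    exact (f.isCoprime_num_denom.symm).dvd_of_dvd_mul_left h1
  obtain ⟨e, he⟩ := hdvd
  refine ⟨e, ?_, ?_, he⟩
  · intro h0; rw [h0, mul_zero] at he; exact hD he
  · have h2 : f.denom * N = f.denom * (f.num * e) := by
      rw [← key, he]; ring
    exact mul_left_cancel₀ f.denom_ne_zero h2

theorem normalForm_of_repr {f : RatFunc K} {N D : Polynomial K} (hD : D ≠ 0)
    (hf : f = algebraMap _ _ N / algebraMap _ _ D)
    (hdeg : D.natDegree < N.natDegree) (hN0 : N.eval 0 = 0) (hD0 : D.eval 0 ≠ 0) :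
    f.IsNormalForm := by
  obtain ⟨e, he0, hNe, hDe⟩ := repr_factor hD hf
  have hN : N ≠ 0 := by intro h0; rw [h0] at hdeg; simp at hdeg
  have hnum : f.num ≠ 0 := by intro h0; rw [h0, zero_mul] at hNe; exact hN hNe
  have hdN : N.natDegree = f.num.natDegree + e.natDegree := by
    rw [hNe, Polynomial.natDegree_mul hnum he0]
  have hdD : D.natDegree = f.denom.natDegree + e.natDegree := by
    rw [hDe, Polynomial.natDegree_mul f.denom_ne_zero he0]
  have he0' : e.eval 0 ≠ 0 := by
    intro h0; rw [hDe] at hD0; simp [h0] at hD0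
  constructor
  · omega
  · rw [hNe, Polynomial.eval_mul] at hN0
    exact (mul_eq_zero.mp hN0).resolve_right he0'

theorem repr_of_normalForm {f : RatFunc K} {N D : Polynomial K} (hD : D ≠ 0)
    (hf : f = algebraMap _ _ N / algebraMap _ _ D) (hnf : f.IsNormalForm) :
    N ≠ 0 ∧ D.natDegree < N.natDegree ∧ N.eval 0 = 0 := by
  obtain ⟨e, he0, hNe, hDe⟩ := repr_factor hD hf
  have hnum : f.num ≠ 0 := by
    intro h0; have := hnf.1; rw [h0] at this; simp at this
  have hN : N ≠ 0 := by rw [hNe]; exact mul_ne_zero hnum he0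
  refine ⟨hN, ?_, ?_⟩
  · rw [hNe, hDe, Polynomial.natDegree_mul hnum he0,
      Polynomial.natDegree_mul f.denom_ne_zero he0]
    have := hnf.1; omega
  · rw [hNe, Polynomial.eval_mul, hnf.2, zero_mul]


theorem aux_mono {dp dq i k m : ℕ} (h : dq ≤ dp) (hik : i ≤ k) (hkm : k ≤ m) :
    i*dp + (m-i)*dq ≤ k*dp + (m-k)*dq := by
  have him : i ≤ m := le_trans hik hkm
  zify [him, hkm]
  nlinarith [mul_le_mul_of_nonneg_left (by exact_mod_cast h : (dq:ℤ) ≤ dp)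
    (by omega : (0:ℤ) ≤ (k:ℤ) - i)]

theorem aux_mono_strict {dp dq i k m : ℕ} (h : dq < dp) (hik : i < k) (hkm : k ≤ m) :
    i*dp + (m-i)*dq < k*dp + (m-k)*dq := by
  have him : i ≤ m := le_trans (le_of_lt hik) hkm
  zify [him, hkm]
  nlinarith [mul_le_mul_of_nonneg_left (by exact_mod_cast h.le : (dq:ℤ) ≤ dp)
    (by omega : (0:ℤ) ≤ (k:ℤ) - i), mul_pos (by omega : (0:ℤ) < (k:ℤ) - i)
    (by push_cast; omega : (0:ℤ) < (dp:ℤ) - dq)]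

theorem homog_term_natDegree_le (r p q : Polynomial K) (m i : ℕ) :
    (C (r.coeff i) * p^i * q^(m-i)).natDegree ≤ i * p.natDegree + (m-i) * q.natDegree := by
  calc (C (r.coeff i) * p^i * q^(m-i)).natDegree
      ≤ (C (r.coeff i) * p^i).natDegree + (q^(m-i)).natDegree := Polynomial.natDegree_mul_le
    _ ≤ (p^i).natDegree + (q^(m-i)).natDegree := by
        gcongr; exact Polynomial.natDegree_C_mul_le _ _
    _ = i * p.natDegree + (m-i) * q.natDegree := by
        rw [Polynomial.natDegree_pow, Polynomial.natDegree_pow]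

theorem homog_coeff_top {r p q : Polynomial K} (hlt : q.natDegree < p.natDegree)
    (hq : q ≠ 0) {m : ℕ} (hm : r.natDegree ≤ m) :
    (homog r p q m).coeff (r.natDegree * p.natDegree + (m - r.natDegree) * q.natDegree)
      = r.leadingCoeff * p.leadingCoeff^r.natDegree * q.leadingCoeff^(m - r.natDegree) := by
  have hp : p ≠ 0 := fun h0 => by rw [h0] at hlt; simp at hlt
  set k := r.natDegree with hk
  set D := k * p.natDegree + (m - k) * q.natDegree with hD
  rw [homog, Polynomial.finset_sum_coeff]
  rw [Finset.sum_eq_single k]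
  · have hterm : (C (r.coeff k) * p^k * q^(m-k)).natDegree = D ∨ r.coeff k = 0 := by
      by_cases hck : r.coeff k = 0
      · exact Or.inr hck
      · left
        rw [Polynomial.natDegree_mul (mul_ne_zero (by simpa using hck) (pow_ne_zero _ hp))
            (pow_ne_zero _ hq),
          Polynomial.natDegree_mul (by simpa using hck) (pow_ne_zero _ hp),
          Polynomial.natDegree_C, Polynomial.natDegree_pow, Polynomial.natDegree_pow]
        omega
    rcases hterm with hterm | hterm
    · rw [← hterm, Polynomial.coeff_natDegree, Polynomial.leadingCoeff_mul,
        Polynomial.leadingCoeff_mul, Polynomial.leadingCoeff_pow, Polynomial.leadingCoeff_pow,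
        Polynomial.leadingCoeff_C]
      rfl
    · have hlc : r.leadingCoeff = 0 := by rw [Polynomial.leadingCoeff, ← hk, hterm]
      rw [hterm, hlc]
      simp
  · intro i hi hik
    rw [Finset.mem_range, Nat.lt_succ_iff] at hi
    rcases lt_or_gt_of_ne hik with hik' | hik'
    · apply Polynomial.coeff_eq_zero_of_natDegree_lt
      exact lt_of_le_of_lt (homog_term_natDegree_le r p q m i)
        (aux_mono_strict hlt hik' hm)
    · have : r.coeff i = 0 := Polynomial.coeff_eq_zero_of_natDegree_lt (by omega)
      simp [this]
  · intro hk'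
    exfalso
    exact hk' (Finset.mem_range.mpr (by omega))

theorem homog_natDegree_le {r p q : Polynomial K} (hle : q.natDegree ≤ p.natDegree)
    {m : ℕ} (hm : r.natDegree ≤ m) :
    (homog r p q m).natDegree ≤ r.natDegree * p.natDegree + (m - r.natDegree) * q.natDegree := by
  refine Polynomial.natDegree_sum_le_of_forall_le _ _ fun i hi => ?_
  rw [Finset.mem_range, Nat.lt_succ_iff] at hi
  by_cases hik : i ≤ r.natDegree
  · exact le_trans (homog_term_natDegree_le r p q m i) (aux_mono hle hik hm)
  · have : r.coeff i = 0 := Polynomial.coeff_eq_zero_of_natDegree_lt (by omega)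
    simp [this]

theorem homog_natDegree {r p q : Polynomial K} (hlt : q.natDegree < p.natDegree)
    (hq : q ≠ 0) (hr : r ≠ 0) {m : ℕ} (hm : r.natDegree ≤ m) :
    (homog r p q m).natDegree
      = r.natDegree * p.natDegree + (m - r.natDegree) * q.natDegree := by
  have hp : p ≠ 0 := fun h0 => by rw [h0] at hlt; simp at hlt
  refine le_antisymm (homog_natDegree_le hlt.le hm) ?_
  refine Polynomial.le_natDegree_of_ne_zero ?_
  rw [homog_coeff_top hlt hq hm]
  exact mul_ne_zero (mul_ne_zero (Polynomial.leadingCoeff_ne_zero.mpr hr)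
    (pow_ne_zero _ (Polynomial.leadingCoeff_ne_zero.mpr hp)))
    (pow_ne_zero _ (Polynomial.leadingCoeff_ne_zero.mpr hq))

theorem homog_reflect (r p q : Polynomial K) (m : ℕ) :
    homog (Polynomial.reflect m r) q p m = homog r p q m := by
  rw [homog, homog, ← Finset.sum_range_reflect]
  refine Finset.sum_congr rfl fun j hj => ?_
  rw [Finset.mem_range, Nat.lt_succ_iff] at hj
  rw [Polynomial.coeff_reflect]
  have h1 : m + 1 - 1 - j = m - j := by omega
  rw [h1, Polynomial.revAt_le (by omega), Nat.sub_sub_self hj]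
  ring

theorem natDegree_reflect_le {r : Polynomial K} {m : ℕ} (hm : r.natDegree ≤ m) :
    (Polynomial.reflect m r).natDegree ≤ m := by
  refine Polynomial.natDegree_le_iff_coeff_eq_zero.mpr fun i hi => ?_
  rw [Polynomial.coeff_reflect]
  have : Polynomial.revAt m i = i := Polynomial.revAt_eq_self_of_lt hi
  rw [this]
  exact Polynomial.coeff_eq_zero_of_natDegree_lt (by omega)


theorem homog_eval_zero_p0 {p : Polynomial K} (r q : Polynomial K) (m : ℕ)
    (hp0 : p.eval 0 = 0) :
    (homog r p q m).eval 0 = r.coeff 0 * (q.eval 0)^m := by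
  rw [homog, Polynomial.eval_finset_sum]
  rw [Finset.sum_eq_single 0]
  · simp
  · intro i hi hi0
    simp [hp0, zero_pow hi0]
  · intro h; exfalso; exact h (Finset.mem_range.mpr (by omega))

theorem homog_eval_zero_q0 {q : Polynomial K} (r p : Polynomial K) (m : ℕ)
    (hq0 : q.eval 0 = 0) :
    (homog r p q m).eval 0 = r.coeff m * (p.eval 0)^m := by
  rw [homog, Polynomial.eval_finset_sum]
  rw [Finset.sum_eq_single m]
  · simp
  · intro i hi hi0
    rw [Finset.mem_range, Nat.lt_succ_iff] at hi
    have : m - i ≠ 0 := by omega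
    simp [hq0, zero_pow this]
  · intro h; exfalso; exact h (Finset.mem_range.mpr (by omega))

theorem homog_eval_zero {q : Polynomial K} (r p : Polynomial K) {m : ℕ}
    (hq0 : q.eval 0 ≠ 0) (hm : r.natDegree ≤ m) :
    (homog r p q m).eval 0 = r.eval (p.eval 0 / q.eval 0) * (q.eval 0)^m := by
  have := homog_map (Polynomial.aeval (0:K) : Polynomial K →ₐ[K] K) r p q m
    (by simpa [Polynomial.coe_aeval_eq_eval] using hq0) hm
  simpa [Polynomial.coe_aeval_eq_eval] using this

theorem pow_div_mul_eq {a b : K} (hb : b ≠ 0) {i m : ℕ} (him : i ≤ m) :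
    (a / b)^i * b^m = a^i * b^(m-i) := by
  rw [div_pow, pow_sub₀ _ hb him]
  field_simp

theorem homog_coeff_topEq {p q : Polynomial K} (hp : p ≠ 0) (hq : q ≠ 0)
    (hpq : p.natDegree = q.natDegree) (r : Polynomial K) {m : ℕ} (hm : r.natDegree ≤ m) :
    (homog r p q m).coeff (m * q.natDegree)
      = r.eval (p.leadingCoeff / q.leadingCoeff) * q.leadingCoeff^m := by
  rw [homog, Polynomial.finset_sum_coeff]
  have hstep : ∀ i ∈ Finset.range (m+1),
      (C (r.coeff i) * p^i * q^(m-i)).coeff (m * q.natDegree)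
        = r.coeff i * p.leadingCoeff^i * q.leadingCoeff^(m-i) := by
    intro i hi
    rw [Finset.mem_range, Nat.lt_succ_iff] at hi
    by_cases hci : r.coeff i = 0
    · simp [hci]
    · have hC : C (r.coeff i) ≠ 0 := by simpa using hci
      have hdeg : (C (r.coeff i) * p^i * q^(m-i)).natDegree = m * q.natDegree := by
        rw [Polynomial.natDegree_mul (mul_ne_zero hC (pow_ne_zero _ hp)) (pow_ne_zero _ hq),
          Polynomial.natDegree_mul hC (pow_ne_zero _ hp), Polynomial.natDegree_C,
          Polynomial.natDegree_pow, Polynomial.natDegree_pow, hpq]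
        have : i ≤ m := hi
        zify [this]
        ring
      rw [← hdeg, Polynomial.coeff_natDegree, Polynomial.leadingCoeff_mul,
        Polynomial.leadingCoeff_mul, Polynomial.leadingCoeff_pow, Polynomial.leadingCoeff_pow,
        Polynomial.leadingCoeff_C]
  rw [Finset.sum_congr rfl hstep]
  rw [Polynomial.eval_eq_sum_range' (Nat.lt_succ_of_le hm), Finset.sum_mul]
  refine Finset.sum_congr rfl fun i hi => ?_
  rw [Finset.mem_range, Nat.lt_succ_iff] at hi
  have e1 := pow_div_mul_eq (a := p.leadingCoeff) (Polynomial.leadingCoeff_ne_zero.mpr hq) hi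
  rw [mul_assoc, mul_assoc, e1]

theorem homog_natDegree_le_eq {p q : Polynomial K} (hpq : p.natDegree = q.natDegree)
    (r : Polynomial K) {m : ℕ} (hm : r.natDegree ≤ m) :
    (homog r p q m).natDegree ≤ m * q.natDegree := by
  have h1 := homog_natDegree_le (p := p) (q := q) (r := r) hpq.ge hm
  rw [hpq] at h1
  have h2 : r.natDegree * q.natDegree + (m - r.natDegree) * q.natDegree = m * q.natDegree := by
    rw [← Nat.add_mul]
    congr 1
    omega
  omega


/-- linear polynomial `a*X + b` -/
noncomputable def lin (a b : K) : Polynomial K := C a * X + C b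

theorem lin_coeff_one (a b : K) : (lin a b).coeff 1 = a := by simp [lin]

theorem lin_coeff_zero (a b : K) : (lin a b).coeff 0 = b := by simp [lin]

theorem lin_ne_zero {a b : K} (hab : a ≠ 0 ∨ b ≠ 0) : lin a b ≠ 0 := by
  intro h0
  rcases hab with ha | hb
  · exact ha (by rw [← lin_coeff_one a b, h0]; simp)
  · exact hb (by rw [← lin_coeff_zero a b, h0]; simp)

theorem lin_natDegree_le (a b : K) : (lin a b).natDegree ≤ 1 := by
  apply Polynomial.natDegree_linear_le

theorem lin_natDegree {a : K} (ha : a ≠ 0) (b : K) : (lin a b).natDegree = 1 :=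
  Polynomial.natDegree_linear ha

theorem lin_eval (a b x : K) : (lin a b).eval x = a * x + b := by simp [lin]

theorem lin_isCoprime {a₁ a₀ b₁ b₀ : K} (hdet : a₁*b₀ - a₀*b₁ ≠ 0) :
    IsCoprime (lin a₁ a₀) (lin b₁ b₀) := by
  set dt := a₁*b₀ - a₀*b₁
  refine ⟨C (-b₁/dt), C (a₁/dt), ?_⟩
  rw [lin, lin]
  have h1 : (-b₁/dt) * a₁ + (a₁/dt) * b₁ = 0 := by field_simp; ring
  have h2 : (-b₁/dt) * a₀ + (a₁/dt) * b₀ = 1 := by field_simp; ring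
  have expand : C (-b₁/dt) * (C a₁ * X + C a₀) + C (a₁/dt) * (C b₁ * X + C b₀)
      = C ((-b₁/dt) * a₁ + (a₁/dt) * b₁) * X + C ((-b₁/dt) * a₀ + (a₁/dt) * b₀) := by
    rw [Polynomial.C_add, Polynomial.C_mul, Polynomial.C_mul, Polynomial.C_add,
      Polynomial.C_mul, Polynomial.C_mul]
    ring
  rw [expand, h1, h2]
  simp

/-- Möbius transformation `(a₁ x + a₀) / (b₁ x + b₀)` -/
noncomputable def mobius (a₁ a₀ b₁ b₀ : K) : RatFunc K :=
  algebraMap (Polynomial K) (RatFunc K) (lin a₁ a₀)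
    / algebraMap (Polynomial K) (RatFunc K) (lin b₁ b₀)

theorem deg_div_coprime {A B : Polynomial K} (hcop : IsCoprime A B) (hB : B ≠ 0) :
    (algebraMap (Polynomial K) (RatFunc K) A / algebraMap _ _ B).deg
      = max A.natDegree B.natDegree := by
  set f := algebraMap (Polynomial K) (RatFunc K) A / algebraMap _ _ B with hf
  obtain ⟨e, he0, hNe, hDe⟩ := repr_factor hB hf
  have hunit : IsUnit e := hcop.isUnit_of_dvd' ⟨f.num, by rw [hNe]; ring⟩
    ⟨f.denom, by rw [hDe]; ring⟩
  have hedeg : e.natDegree = 0 := Polynomial.natDegree_eq_zero_of_isUnit hunit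
  by_cases hA : A = 0
  · have hnum : f.num = 0 := by
      have : f = 0 := by rw [hf, hA, map_zero, zero_div]
      rw [this, RatFunc.num_zero]
    have hBdeg : B.natDegree = 0 := by
      rw [hA] at hcop
      exact Polynomial.natDegree_eq_zero_of_isUnit (isCoprime_zero_left.mp hcop)
    have hden : f.denom.natDegree = 0 := by
      rw [hDe] at hBdeg
      rw [Polynomial.natDegree_mul f.denom_ne_zero he0] at hBdeg
      omega
    rw [RatFunc.deg, hnum, hA, hBdeg]
    simp [hden]
  · have hnum : f.num ≠ 0 := by
      intro h0; rw [h0, zero_mul] at hNe; exact hA hNe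
    rw [RatFunc.deg, hNe, hDe, Polynomial.natDegree_mul hnum he0,
      Polynomial.natDegree_mul f.denom_ne_zero he0, hedeg]
    simp


theorem mobius_deg {a₁ a₀ b₁ b₀ : K} (hdet : a₁*b₀ - a₀*b₁ ≠ 0) :
    (mobius a₁ a₀ b₁ b₀).deg = 1 := by
  have hb : b₁ ≠ 0 ∨ b₀ ≠ 0 := by
    by_contra hc
    push_neg at hc
    rw [hc.1, hc.2] at hdet
    simp at hdet
  rw [mobius, deg_div_coprime (lin_isCoprime hdet) (lin_ne_zero hb)]
  by_cases ha1 : a₁ ≠ 0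
  · rw [lin_natDegree ha1]
    have := lin_natDegree_le b₁ b₀
    omega
  · push_neg at ha1
    have hb1 : b₁ ≠ 0 := by
      intro hb1
      rw [ha1, hb1] at hdet
      simp at hdet
    rw [lin_natDegree hb1]
    have := lin_natDegree_le a₁ a₀
    omega

theorem aeval_lin {P Q : Polynomial K} (hQ : Q ≠ 0) (e f : K) :
    Polynomial.aeval ((algebraMap (Polynomial K) (RatFunc K) P) / algebraMap _ _ Q)
        (lin e f)
      = algebraMap (Polynomial K) (RatFunc K) (C e * P + C f * Q) / algebraMap _ _ Q := by
  have hQ' : algebraMap (Polynomial K) (RatFunc K) Q ≠ 0 := RatFunc.algebraMap_ne_zero hQ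
  rw [lin, map_add, map_mul, Polynomial.aeval_C, Polynomial.aeval_C, Polynomial.aeval_X]
  rw [IsScalarTower.algebraMap_apply K (Polynomial K) (RatFunc K),
    IsScalarTower.algebraMap_apply K (Polynomial K) (RatFunc K)]
  rw [map_add, map_mul, map_mul, Polynomial.algebraMap_eq]
  field_simp

theorem mobius_comp {a₁ a₀ b₁ b₀ : K} (hdet : a₁*b₀ - a₀*b₁ ≠ 0) :
    (mobius a₁ a₀ b₁ b₀).comp (mobius b₀ (-a₀) (-b₁) a₁) = RatFunc.X := by
  have hdet2 : b₀*a₁ - (-a₀)*(-b₁) ≠ 0 := by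
    have : b₀*a₁ - (-a₀)*(-b₁) = a₁*b₀ - a₀*b₁ := by ring
    rw [this]; exact hdet
  have hv : 1 ≤ (mobius b₀ (-a₀) (-b₁) a₁).deg := by rw [mobius_deg hdet2]
  have hB : lin b₁ b₀ ≠ 0 := by
    apply lin_ne_zero
    by_contra hc
    push_neg at hc
    rw [hc.1, hc.2] at hdet
    simp at hdet
  have hQ : lin (-b₁) a₁ ≠ 0 := by
    apply lin_ne_zero
    by_contra hc
    push_neg at hc
    have h1 : b₁ = 0 := by have := hc.1; simpa using this
    rw [h1, hc.2] at hdet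
    simp at hdet
  rw [mobius, comp_repr hv hB]
  simp only [mobius]
  rw [aeval_lin hQ, aeval_lin hQ]
  rw [div_div_div_cancel_right₀ (RatFunc.algebraMap_ne_zero hQ)]
  have e1 : C a₁ * lin b₀ (-a₀) + C a₀ * lin (-b₁) a₁ = C (a₁*b₀ - a₀*b₁) * X := by
    rw [lin, lin, Polynomial.C_sub, Polynomial.C_mul, Polynomial.C_mul, Polynomial.C_neg,
      Polynomial.C_neg]
    ring
  have e2 : C b₁ * lin b₀ (-a₀) + C b₀ * lin (-b₁) a₁ = C (a₁*b₀ - a₀*b₁) := by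
    rw [lin, lin, Polynomial.C_sub, Polynomial.C_mul, Polynomial.C_mul, Polynomial.C_neg,
      Polynomial.C_neg]
    ring
  have hC : algebraMap (Polynomial K) (RatFunc K) (C (a₁*b₀ - a₀*b₁)) ≠ 0 :=
    RatFunc.algebraMap_ne_zero (by
      intro h0
      rw [Polynomial.C_eq_zero] at h0
      exact hdet h0)
  rw [e1, e2, map_mul, mul_div_assoc, mul_comm, div_mul_cancel₀ _ hC, RatFunc.algebraMap_X]

theorem mobius_comp' {a₁ a₀ b₁ b₀ : K} (hdet : a₁*b₀ - a₀*b₁ ≠ 0) :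
    (mobius b₀ (-a₀) (-b₁) a₁).comp (mobius a₁ a₀ b₁ b₀) = RatFunc.X := by
  have hdet2 : b₀*a₁ - (-a₀)*(-b₁) ≠ 0 := by
    have : b₀*a₁ - (-a₀)*(-b₁) = a₁*b₀ - a₀*b₁ := by ring
    rw [this]; exact hdet
  have := mobius_comp hdet2
  simpa using this


theorem homog_zero (p q : Polynomial K) (m : ℕ) : homog 0 p q m = 0 := by simp [homog]

theorem coprime_eval_ne_zero {p q : Polynomial K} (h : IsCoprime p q) {x : K}
    (hp : p.eval x = 0) : q.eval x ≠ 0 := by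
  obtain ⟨s, t, hst⟩ := h
  intro hq
  have := congrArg (Polynomial.eval x) hst
  simp [hp, hq] at this

theorem deg_ge_one_of_normalForm {h : RatFunc K} (hn : h.IsNormalForm) : 1 ≤ h.deg := by
  have := hn.1
  rw [RatFunc.deg]
  omega

theorem comp_assoc {v w : RatFunc K} (g : RatFunc K) (hv : 1 ≤ v.deg) (hw : 1 ≤ w.deg) :
    (g.comp v).comp w = g.comp (v.comp w) := by
  set M := g.deg with hM
  set N₁ := homog g.num v.num v.denom M with hN₁
  set D₁ := homog g.denom v.num v.denom M with hD₁
  have hrepr : g.comp v = algebraMap _ _ N₁ / algebraMap _ _ D₁ := comp_eq_repr hv g le_rfl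
  have hD₁0 : D₁ ≠ 0 := homog_ne_zero' v.isCoprime_num_denom v.denom_ne_zero hv
    g.denom_ne_zero (le_trans (le_max_right _ _) le_rfl)
  rw [hrepr, comp_repr hw hD₁0]
  have hqw : Polynomial.aeval w v.denom ≠ 0 := aeval_ne_zero hw v.denom_ne_zero
  have h1 := homog_map (Polynomial.aeval w : Polynomial K →ₐ[K] RatFunc K) g.num v.num v.denom M
    hqw (le_trans (le_max_left _ _) le_rfl)
  have h2 := homog_map (Polynomial.aeval w : Polynomial K →ₐ[K] RatFunc K) g.denom v.num v.denom M
    hqw (le_trans (le_max_right _ _) le_rfl)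
  have hvw : (Polynomial.aeval w) v.num / (Polynomial.aeval w) v.denom = v.comp w := rfl
  rw [hvw] at h1 h2
  show (Polynomial.aeval w) N₁ / (Polynomial.aeval w) D₁ = _
  rw [h1, h2, RatFunc.comp, mul_div_mul_right _ _ (pow_ne_zero _ hqw)]
  rfl

theorem normalForm_comp {f g₁ h₁ : RatFunc K} (hf : f.IsNormalForm) (hh : h₁.IsNormalForm)
    (hcomp : f = g₁.comp h₁) : g₁.IsNormalForm := by
  have hh1 : 1 ≤ h₁.deg := deg_ge_one_of_normalForm hh
  set M := g₁.deg with hM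
  set N := homog g₁.num h₁.num h₁.denom M with hN
  set D := homog g₁.denom h₁.num h₁.denom M with hD
  have hD0 : D ≠ 0 := homog_ne_zero' h₁.isCoprime_num_denom h₁.denom_ne_zero hh1
    g₁.denom_ne_zero (le_max_right _ _)
  have hrepr : f = algebraMap _ _ N / algebraMap _ _ D := by
    rw [hcomp]; exact comp_eq_repr hh1 g₁ le_rfl
  obtain ⟨hNne, hdegND, hN0⟩ := repr_of_normalForm hD0 hrepr hf
  have hp0 : h₁.num.eval 0 = 0 := hh.2
  have hq0 : h₁.denom.eval 0 ≠ 0 := coprime_eval_ne_zero h₁.isCoprime_num_denom hp0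
  have hnn : g₁.num ≠ 0 := by
    intro h0
    rw [hN, h0, homog_zero] at hNne
    exact hNne rfl
  have hev : N.eval 0 = g₁.num.coeff 0 * (h₁.denom.eval 0)^M :=
    homog_eval_zero_p0 _ _ _ hp0
  have hnum0 : g₁.num.eval 0 = 0 := by
    rw [hN, hev] at hN0
    rcases mul_eq_zero.mp hN0 with h' | h'
    · rwa [Polynomial.coeff_zero_eq_eval_zero] at h'
    · exact absurd h' (pow_ne_zero _ hq0)
  have hdn : N.natDegree = g₁.num.natDegree * h₁.num.natDegree
      + (M - g₁.num.natDegree) * h₁.denom.natDegree :=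
    homog_natDegree hh.1 h₁.denom_ne_zero hnn (le_max_left _ _)
  have hdd : D.natDegree = g₁.denom.natDegree * h₁.num.natDegree
      + (M - g₁.denom.natDegree) * h₁.denom.natDegree :=
    homog_natDegree hh.1 h₁.denom_ne_zero g₁.denom_ne_zero (le_max_right _ _)
  constructor
  · by_contra hc
    push_neg at hc
    have hmono := aux_mono (dp := h₁.num.natDegree) (dq := h₁.denom.natDegree)
      (m := M) hh.1.le hc (le_max_right _ _)
    rw [← hdn, ← hdd] at hmono
    omega
  · exact hnum0

theorem main_case {h : RatFunc K} (hh : 1 ≤ h.deg) {α₁ α₀ β₁ β₀ : K}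
    (hdet : α₁*β₀ - α₀*β₁ ≠ 0)
    (hN0 : (C α₁ * h.num + C α₀ * h.denom).eval 0 = 0)
    (hD0 : (C β₁ * h.num + C β₀ * h.denom).eval 0 ≠ 0)
    (hdeg : (C β₁ * h.num + C β₀ * h.denom).natDegree
      < (C α₁ * h.num + C α₀ * h.denom).natDegree) :
    ((mobius α₁ α₀ β₁ β₀).comp h).IsNormalForm := by
  have hB : lin β₁ β₀ ≠ 0 := by
    apply lin_ne_zero
    by_contra hc
    push_neg at hc
    rw [hc.1, hc.2] at hdet
    simp at hdet
  have hDne : C β₁ * h.num + C β₀ * h.denom ≠ 0 := fun h0 => hD0 (by rw [h0]; simp)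
  have hrepr : (mobius α₁ α₀ β₁ β₀).comp h
      = algebraMap (Polynomial K) (RatFunc K) (C α₁ * h.num + C α₀ * h.denom)
        / algebraMap _ _ (C β₁ * h.num + C β₀ * h.denom) := by
    rw [mobius, comp_repr hh hB]
    have e1 := aeval_lin (P := h.num) (Q := h.denom) h.denom_ne_zero α₁ α₀
    have e2 := aeval_lin (P := h.num) (Q := h.denom) h.denom_ne_zero β₁ β₀
    rw [h.num_div_denom] at e1 e2
    rw [e1, e2, div_div_div_cancel_right₀ (RatFunc.algebraMap_ne_zero h.denom_ne_zero)]
  exact normalForm_of_repr hDne hrepr hdeg hN0 hD0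

theorem main_glue {f g h u v : RatFunc K} (hh : 1 ≤ h.deg)
    (hf : f.IsNormalForm) (hcomp : f = g.comp h)
    (hu : u.deg = 1) (hv : v.deg = 1) (hvu : v.comp u = RatFunc.X)
    (hn : (u.comp h).IsNormalForm) :
    (g.comp v).IsNormalForm ∧ f = (g.comp v).comp (u.comp h) := by
  have huh : 1 ≤ (u.comp h).deg := deg_ge_one_of_normalForm hn
  have hassoc1 : (g.comp v).comp (u.comp h) = g.comp (v.comp (u.comp h)) :=
    comp_assoc g (by omega) huh
  have hassoc2 : v.comp (u.comp h) = (v.comp u).comp h :=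
    (comp_assoc v (by omega) hh).symm
  have hfeq : f = (g.comp v).comp (u.comp h) := by
    rw [hassoc1, hassoc2, hvu, comp_X_left trivial, ← hcomp]
  exact ⟨normalForm_comp hf hn hfeq, hfeq⟩


theorem natDegree_lt_of_coeff_zero {s : Polynomial K} {k : ℕ} (hle : s.natDegree ≤ k)
    (h0 : s ≠ 0) (hc : s.coeff k = 0) : s.natDegree < k := by
  rcases lt_or_eq_of_le hle with hlt | heq
  · exact hlt
  · exfalso
    apply h0
    rw [← Polynomial.leadingCoeff_eq_zero, Polynomial.leadingCoeff, heq]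
    exact hc

end NFAux

open NFAux in
theorem decomposition_equiv_normalForm' {K : Type*} [Field K] (f g h : RatFunc K)
    (hf : f.IsNormalForm) (hg : 1 ≤ g.deg) (hh : 1 ≤ h.deg) (hcomp : f = g.comp h) :
    ∃ u v : RatFunc K, u.deg = 1 ∧ v.deg = 1 ∧
      u.comp v = RatFunc.X ∧ v.comp u = RatFunc.X ∧
      (g.comp v).IsNormalForm ∧ (u.comp h).IsNormalForm ∧
      f = (g.comp v).comp (u.comp h) := by
  classical
  have hq : h.denom ≠ 0 := h.denom_ne_zero
  have hcopr := h.isCoprime_num_denom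
  set M := g.deg with hM
  have hmn : g.num.natDegree ≤ M := le_max_left _ _
  have hmd : g.denom.natDegree ≤ M := le_max_right _ _
  have hD0 : homog g.denom h.num h.denom M ≠ 0 :=
    homog_ne_zero' hcopr hq hh g.denom_ne_zero hmd
  have hrepr : f = algebraMap _ _ (homog g.num h.num h.denom M)
      / algebraMap _ _ (homog g.denom h.num h.denom M) := by
    rw [hcomp]; exact comp_eq_repr hh g le_rfl
  obtain ⟨hNne, hdegND, hN0⟩ := repr_of_normalForm hD0 hrepr hf
  have hnn : g.num ≠ 0 := fun h0 => hNne (by rw [h0, homog_zero])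
  have hp : h.num ≠ 0 := by
    intro h0
    have h00 : h = 0 := RatFunc.num_eq_zero_iff.mp h0
    rw [RatFunc.deg, h0, h00] at hh
    simp at hh
  -- helper for assembling the result in each case
  have finish : ∀ α₁ α₀ β₁ β₀ : K, α₁*β₀ - α₀*β₁ ≠ 0 →
      (Polynomial.C α₁ * h.num + Polynomial.C α₀ * h.denom).eval 0 = 0 →
      (Polynomial.C β₁ * h.num + Polynomial.C β₀ * h.denom).eval 0 ≠ 0 →
      (Polynomial.C β₁ * h.num + Polynomial.C β₀ * h.denom).natDegree
        < (Polynomial.C α₁ * h.num + Polynomial.C α₀ * h.denom).natDegree →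
      ∃ u v : RatFunc K, u.deg = 1 ∧ v.deg = 1 ∧
        u.comp v = RatFunc.X ∧ v.comp u = RatFunc.X ∧
        (g.comp v).IsNormalForm ∧ (u.comp h).IsNormalForm ∧
        f = (g.comp v).comp (u.comp h) := by
    intro α₁ α₀ β₁ β₀ hdet hN0' hD0' hdeg'
    have hdet2 : β₀*α₁ - (-α₀)*(-β₁) ≠ 0 := by
      have e : β₀*α₁ - (-α₀)*(-β₁) = α₁*β₀ - α₀*β₁ := by ring
      rw [e]; exact hdet
    have hnorm := main_case hh hdet hN0' hD0' hdeg'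
    have glue := main_glue hh hf hcomp (mobius_deg hdet) (mobius_deg hdet2)
      (mobius_comp' hdet) hnorm
    exact ⟨_, _, mobius_deg hdet, mobius_deg hdet2, mobius_comp hdet, mobius_comp' hdet,
      glue.1, hnorm, glue.2⟩
  by_cases hq0 : h.denom.eval 0 = 0
  · -- h(0) = ∞
    have hp0 : h.num.eval 0 ≠ 0 := coprime_eval_ne_zero hcopr.symm hq0
    rcases lt_trichotomy h.num.natDegree h.denom.natDegree with hlt | heq | hgt
    · -- case 2b : h(∞) = 0, u = 1/x
      refine finish 0 1 1 0 (by norm_num) (by simp [hq0]) (by simpa using hp0) ?_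
      simpa using hlt
    · -- case 2c : h(∞) = c, u = 1/(x-c)
      set c := h.num.leadingCoeff / h.denom.leadingCoeff with hc
      refine finish 0 1 1 (-c) (by norm_num) (by simp [hq0]) (by simpa [hq0] using hp0) ?_
      simp only [map_one, one_mul, map_zero, zero_mul, zero_add]
      have hlqne : h.denom.leadingCoeff ≠ 0 := Polynomial.leadingCoeff_ne_zero.mpr hq
      have hDne : h.num + Polynomial.C (-c) * h.denom ≠ 0 := by
        intro h0
        have := congrArg (Polynomial.eval 0) h0
        simp [hq0] at this
        exact hp0 this
      have hle : (h.num + Polynomial.C (-c) * h.denom).natDegree ≤ h.num.natDegree := by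
        refine le_trans (Polynomial.natDegree_add_le _ _) (max_le le_rfl ?_)
        exact le_trans (Polynomial.natDegree_C_mul_le _ _) heq.ge
      have hcoeff : (h.num + Polynomial.C (-c) * h.denom).coeff h.num.natDegree = 0 := by
        rw [Polynomial.coeff_add, Polynomial.coeff_C_mul, Polynomial.coeff_natDegree, heq,
          Polynomial.coeff_natDegree, hc]
        field_simp
        ring
      have := natDegree_lt_of_coeff_zero hle hDne hcoeff
      omega
    · -- case 2a : h(0) = h(∞) = ∞, impossible
      exfalso
      have hev : (homog g.num h.num h.denom M).eval 0
          = g.num.coeff M * (h.num.eval 0)^M := homog_eval_zero_q0 _ _ _ hq0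
      have hcM : g.num.coeff M = 0 := by
        rw [hev] at hN0
        rcases mul_eq_zero.mp hN0 with h' | h'
        · exact h'
        · exact absurd h' (pow_ne_zero _ hp0)
      have hdn : g.num.natDegree < M := by
        rcases lt_or_eq_of_le hmn with h' | h'
        · exact h'
        · exfalso
          apply hnn
          rw [← Polynomial.leadingCoeff_eq_zero, Polynomial.leadingCoeff, h']
          exact hcM
      have hdd : g.denom.natDegree = M := by
        rw [hM, RatFunc.deg] at *
        omega
      have hN : (homog g.num h.num h.denom M).natDegree
          = g.num.natDegree * h.num.natDegree + (M - g.num.natDegree) * h.denom.natDegree :=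
        homog_natDegree hgt hq hnn hmn
      have hD : (homog g.denom h.num h.denom M).natDegree
          = g.denom.natDegree * h.num.natDegree + (M - g.denom.natDegree) * h.denom.natDegree :=
        homog_natDegree hgt hq g.denom_ne_zero hmd
      have := aux_mono_strict (dp := h.num.natDegree) (dq := h.denom.natDegree) (m := M)
        hgt hdn le_rfl
      rw [← hN] at this
      rw [hdd] at hD
      omega
  · -- h(0) = b finite
    set b := h.num.eval 0 / h.denom.eval 0 with hb
    have hbq : b * h.denom.eval 0 = h.num.eval 0 := by
      rw [hb]; field_simp
    rcases lt_trichotomy h.num.natDegree h.denom.natDegree with hlt | heq | hgt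
    · -- case 1b : h(∞) = 0, need b ≠ 0, u = (x-b)/x
      have hp0 : h.num.eval 0 ≠ 0 := by
        intro hp0
        -- contradiction via degrees
        have hn0 : g.num.eval 0 = 0 := by
          have hev : (homog g.num h.num h.denom M).eval 0
              = g.num.coeff 0 * (h.denom.eval 0)^M := homog_eval_zero_p0 _ _ _ hp0
          rw [hev] at hN0
          rcases mul_eq_zero.mp hN0 with h' | h'
          · rwa [Polynomial.coeff_zero_eq_eval_zero] at h'
          · exact absurd h' (pow_ne_zero _ hq0)
        have hd0 : g.denom.eval 0 ≠ 0 :=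
          coprime_eval_ne_zero g.isCoprime_num_denom hn0
        set r₁ := Polynomial.reflect M g.num with hr₁
        set r₂ := Polynomial.reflect M g.denom with hr₂
        have hr₁ne : r₁ ≠ 0 := fun h0 => hnn (Polynomial.reflect_eq_zero_iff.mp h0)
        have hr₁le : r₁.natDegree ≤ M := natDegree_reflect_le hmn
        have hr₁top : r₁.coeff M = 0 := by
          rw [hr₁, Polynomial.coeff_reflect, Polynomial.revAt_le le_rfl, Nat.sub_self,
            Polynomial.coeff_zero_eq_eval_zero]
          exact hn0
        have hr₁lt : r₁.natDegree < M := natDegree_lt_of_coeff_zero hr₁le hr₁ne hr₁top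
        have hr₂deg : r₂.natDegree = M := by
          refine le_antisymm (natDegree_reflect_le hmd) (Polynomial.le_natDegree_of_ne_zero ?_)
          rw [hr₂, Polynomial.coeff_reflect, Polynomial.revAt_le le_rfl, Nat.sub_self,
            Polynomial.coeff_zero_eq_eval_zero]
          exact hd0
        have hNdeg : (homog g.num h.num h.denom M).natDegree
            = r₁.natDegree * h.denom.natDegree + (M - r₁.natDegree) * h.num.natDegree := by
          rw [← homog_reflect g.num h.num h.denom M, ← hr₁]
          exact homog_natDegree hlt hp hr₁ne hr₁le
        have hDdeg : (homog g.denom h.num h.denom M).natDegree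
            = r₂.natDegree * h.denom.natDegree + (M - r₂.natDegree) * h.num.natDegree := by
          rw [← homog_reflect g.denom h.num h.denom M, ← hr₂]
          exact homog_natDegree hlt hp (fun h0 => g.denom_ne_zero
            (Polynomial.reflect_eq_zero_iff.mp h0)) hr₂deg.le
        have := aux_mono_strict (dp := h.denom.natDegree) (dq := h.num.natDegree) (m := M)
          hlt hr₁lt le_rfl
        rw [← hNdeg] at this
        rw [hr₂deg] at hDdeg
        omega
      have hbne : b ≠ 0 := by
        rw [hb]
        exact div_ne_zero hp0 hq0
      refine finish 1 (-b) 1 0 (by simpa using hbne) ?_ (by simpa using hp0) ?_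
      · simp only [map_one, one_mul, Polynomial.eval_add, Polynomial.eval_mul,
          Polynomial.eval_C]
        rw [← hbq]; ring
      · simp only [map_one, one_mul, map_zero, zero_mul, add_zero]
        have hCb : (Polynomial.C (-b) * h.denom).natDegree = h.denom.natDegree :=
          Polynomial.natDegree_C_mul (by simpa using hbne)
        rw [Polynomial.natDegree_add_eq_right_of_natDegree_lt (by rw [hCb]; exact hlt), hCb]
        exact hlt
    · -- case 1c : h(∞) = c finite nonzero denominator, need b ≠ c, u = (x-b)/(x-c)
      set c := h.num.leadingCoeff / h.denom.leadingCoeff with hc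
      have hlqne : h.denom.leadingCoeff ≠ 0 := Polynomial.leadingCoeff_ne_zero.mpr hq
      have hlpc : c * h.denom.leadingCoeff = h.num.leadingCoeff := by
        rw [hc]; field_simp
      have hbc : b ≠ c := by
        intro hbceq
        have hev : (homog g.num h.num h.denom M).eval 0
            = g.num.eval (h.num.eval 0 / h.denom.eval 0) * (h.denom.eval 0)^M :=
          homog_eval_zero g.num h.num hq0 hmn
        have hnb : g.num.eval b = 0 := by
          rw [hev] at hN0
          rcases mul_eq_zero.mp hN0 with h' | h'
          · rwa [← hb] at h'
          · exact absurd h' (pow_ne_zero _ hq0)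
        have hdb : g.denom.eval b ≠ 0 :=
          coprime_eval_ne_zero g.isCoprime_num_denom hnb
        have hcoefD : (homog g.denom h.num h.denom M).coeff (M * h.denom.natDegree)
            = g.denom.eval c * h.denom.leadingCoeff^M := by
          rw [homog_coeff_topEq hp hq heq g.denom hmd, hc]
        have hDge : M * h.denom.natDegree ≤ (homog g.denom h.num h.denom M).natDegree := by
          refine Polynomial.le_natDegree_of_ne_zero ?_
          rw [hcoefD, ← hbceq]
          exact mul_ne_zero hdb (pow_ne_zero _ hlqne)
        have hNle : (homog g.num h.num h.denom M).natDegree ≤ M * h.denom.natDegree :=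
          homog_natDegree_le_eq heq g.num hmn
        omega
      refine finish 1 (-b) 1 (-c) (by
        intro h0
        apply hbc
        have : (1:K) * -c - -b * 1 = b - c := by ring
        rw [this] at h0
        have := sub_eq_zero.mp h0
        exact this) ?_ ?_ ?_
      · simp only [map_one, one_mul, Polynomial.eval_add, Polynomial.eval_mul,
          Polynomial.eval_C]
        rw [← hbq]; ring
      · simp only [map_one, one_mul, Polynomial.eval_add, Polynomial.eval_mul,
          Polynomial.eval_C]
        intro h0
        apply hbc
        have : h.num.eval 0 = c * h.denom.eval 0 := by linear_combination h0
        rw [hb, this]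
        field_simp
      · simp only [map_one, one_mul]
        have hDne : h.num + Polynomial.C (-c) * h.denom ≠ 0 := by
          intro h0
          have := congrArg (Polynomial.eval 0) h0
          simp at this
          apply hbc
          have h2 : h.num.eval 0 = c * h.denom.eval 0 := by linear_combination this
          rw [hb, h2]
          field_simp
        have hleD : (h.num + Polynomial.C (-c) * h.denom).natDegree ≤ h.num.natDegree := by
          refine le_trans (Polynomial.natDegree_add_le _ _) (max_le le_rfl ?_)
          exact le_trans (Polynomial.natDegree_C_mul_le _ _) heq.ge
        have hcoefD : (h.num + Polynomial.C (-c) * h.denom).coeff h.num.natDegree = 0 := by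
          rw [Polynomial.coeff_add, Polynomial.coeff_C_mul, Polynomial.coeff_natDegree, heq,
            Polynomial.coeff_natDegree, ← hlpc]
          ring
        have hDlt := natDegree_lt_of_coeff_zero hleD hDne hcoefD
        have hleN : (h.num + Polynomial.C (-b) * h.denom).natDegree ≤ h.num.natDegree := by
          refine le_trans (Polynomial.natDegree_add_le _ _) (max_le le_rfl ?_)
          exact le_trans (Polynomial.natDegree_C_mul_le _ _) heq.ge
        have hcoefN : (h.num + Polynomial.C (-b) * h.denom).coeff h.num.natDegree ≠ 0 := by
          rw [Polynomial.coeff_add, Polynomial.coeff_C_mul, Polynomial.coeff_natDegree, heq,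
            Polynomial.coeff_natDegree, ← hlpc]
          intro h0
          apply hbc
          have h2 : (c - b) * h.denom.leadingCoeff = 0 := by linear_combination h0
          rcases mul_eq_zero.mp h2 with h' | h'
          · exact (sub_eq_zero.mp h').symm
          · exact absurd h' hlqne
        have hNdeg : (h.num + Polynomial.C (-b) * h.denom).natDegree = h.num.natDegree :=
          le_antisymm hleN (Polynomial.le_natDegree_of_ne_zero hcoefN)
        omega
    · -- case 1a : h(∞) = ∞, u = x - b
      refine finish 1 (-b) 0 1 (by norm_num) ?_ (by simpa using hq0) ?_
      · simp only [map_one, one_mul, Polynomial.eval_add, Polynomial.eval_mul,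
          Polynomial.eval_C]
        rw [← hbq]; ring
      · simp only [map_one, one_mul, map_zero, zero_mul, zero_add]
        rw [Polynomial.natDegree_add_eq_left_of_natDegree_lt
          (lt_of_le_of_lt (Polynomial.natDegree_C_mul_le _ _) hgt)]
        exact hgt

/-- Theorem 4(ii): every decomposition of a rational function in normal form is
equivalent to one where both components are in normal form. -/
theorem decomposition_equiv_normalForm {K : Type*} [Field K] (f g h : RatFunc K)
    (hf : f.IsNormalForm) (hg : 1 ≤ g.deg) (hh : 1 ≤ h.deg) (hcomp : f = g.comp h) :
    ∃ u v : RatFunc K, u.deg = 1 ∧ v.deg = 1 ∧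
      u.comp v = RatFunc.X ∧ v.comp u = RatFunc.X ∧
      (g.comp v).IsNormalForm ∧ (u.comp h).IsNormalForm ∧
      f = (g.comp v).comp (u.comp h) := by
  exact decomposition_equiv_normalForm' f g h hf hg hh hcomp
end

section
/- Let K be a field and f, g, h ∈ K(x) nonconstant rational functions, all three in normal form, with f = g∘h. Then h.num divides f.num in K[x] and h.denom divides f.denom in K[x]. -/
open Polynomial

/-- The homogenization of `r` of degree `N` evaluated at `(h.num, h.denom)`. -/
noncomputable def homPoly {K : Type*} [Field K] (h : RatFunc K) (r : Polynomial K) (N : ℕ) :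
    Polynomial K :=
  ∑ i ∈ Finset.range (N + 1), C (r.coeff i) * h.num ^ i * h.denom ^ (N - i)

lemma homPoly_map {K : Type*} [Field K] (h : RatFunc K) (r : Polynomial K) (N : ℕ)
    (hr : r.natDegree < N + 1) :
    algebraMap (Polynomial K) (RatFunc K) (homPoly h r N)
      = (algebraMap (Polynomial K) (RatFunc K) h.denom) ^ N * Polynomial.aeval h r := by
  have hQ : algebraMap (Polynomial K) (RatFunc K) h.denom ≠ 0 :=
    RatFunc.algebraMap_ne_zero h.denom_ne_zero
  rw [Polynomial.aeval_eq_sum_range' hr h, homPoly, map_sum, Finset.mul_sum]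
  refine Finset.sum_congr rfl fun i hi => ?_
  have hiN : i ≤ N := Nat.lt_succ_iff.mp (Finset.mem_range.mp hi)
  have hP : algebraMap (Polynomial K) (RatFunc K) h.num
      = h * algebraMap (Polynomial K) (RatFunc K) h.denom :=
    (div_eq_iff hQ).mp (RatFunc.num_div_denom h)
  have hpow : (algebraMap (Polynomial K) (RatFunc K) h.denom) ^ i *
      (algebraMap (Polynomial K) (RatFunc K) h.denom) ^ (N - i)
      = (algebraMap (Polynomial K) (RatFunc K) h.denom) ^ N := by
    rw [← pow_add, Nat.add_sub_cancel' hiN]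
  rw [map_mul, map_mul, map_pow, map_pow, hP, mul_pow, Algebra.smul_def,
    IsScalarTower.algebraMap_apply K (Polynomial K) (RatFunc K), ← hpow,
    Polynomial.algebraMap_eq]
  ring

lemma homPoly_first {K : Type*} [Field K] (h : RatFunc K) (r : Polynomial K) (N : ℕ) :
    homPoly h r N = C (r.coeff 0) * h.denom ^ N +
      h.num * ∑ i ∈ Finset.range N, C (r.coeff (i + 1)) * h.num ^ i * h.denom ^ (N - 1 - i) := by
  rw [homPoly, Finset.sum_range_succ', pow_zero, mul_one, Finset.mul_sum, add_comm]
  congr 1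
  refine Finset.sum_congr rfl fun i hi => ?_
  have : N - (i + 1) = N - 1 - i := by omega
  rw [this, pow_succ]
  ring

lemma homPoly_last {K : Type*} [Field K] (h : RatFunc K) (r : Polynomial K) (N : ℕ)
    (hN : 1 ≤ N) :
    homPoly h r N = C (r.coeff N) * h.num ^ N +
      h.denom * ∑ i ∈ Finset.range N, C (r.coeff i) * h.num ^ i * h.denom ^ (N - 1 - i) := by
  rw [homPoly, Finset.sum_range_succ, Nat.sub_self, pow_zero, mul_one, Finset.mul_sum, add_comm]
  congr 1
  refine Finset.sum_congr rfl fun i hi => ?_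
  have hiN : i < N := Finset.mem_range.mp hi
  have : N - i = (N - 1 - i) + 1 := by omega
  rw [this, pow_succ]
  ring

/-- If `f = g ∘ h` with `f`, `g`, `h` in normal form, then the numerator of `h` divides
the numerator of `f` and the denominator of `h` divides the denominator of `f`. -/
theorem num_denom_dvd_of_normalForm_comp {K : Type*} [Field K] (f g h : RatFunc K)
    (hf1 : 1 ≤ f.deg) (hg1 : 1 ≤ g.deg) (hh1 : 1 ≤ h.deg)
    (hf : f.IsNormalForm) (hg : g.IsNormalForm) (hh : h.IsNormalForm)
    (hcomp : f = g.comp h) :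
    h.num ∣ f.num ∧ h.denom ∣ f.denom := by
  set ι := algebraMap (Polynomial K) (RatFunc K) with hι
  set n := g.num.natDegree with hn
  set m := g.denom.natDegree with hm
  have hnm : m < n := hg.1
  -- f is nonzero
  have hfnum_ne : f.num ≠ 0 := by
    intro h0
    have := hf.1
    rw [h0, natDegree_zero] at this
    exact Nat.not_lt_zero _ this
  have hfne : f ≠ 0 := fun h0 => hfnum_ne (RatFunc.num_eq_zero_iff.mpr h0)
  have hqaeval : Polynomial.aeval h g.denom ≠ 0 := by
    intro h0
    apply hfne
    rw [hcomp, RatFunc.comp, h0, div_zero]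
  have hQ : ι h.denom ≠ 0 := RatFunc.algebraMap_ne_zero h.denom_ne_zero
  have hFd : ι f.denom ≠ 0 := RatFunc.algebraMap_ne_zero f.denom_ne_zero
  -- key cross-multiplication identity
  have h1 : ι f.num = f * ι f.denom :=
    (div_eq_iff hFd).mp (RatFunc.num_div_denom f)
  have h2 : f * Polynomial.aeval h g.denom = Polynomial.aeval h g.num := by
    rw [hcomp, RatFunc.comp]
    exact div_mul_cancel₀ _ hqaeval
  have h3 : (ι h.denom) ^ m * (ι h.denom) ^ (n - m) = (ι h.denom) ^ n := by
    rw [← pow_add, Nat.add_sub_cancel' hnm.le]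
  have key : f.num * (homPoly h g.denom m * h.denom ^ (n - m))
      = homPoly h g.num n * f.denom := by
    apply RatFunc.algebraMap_injective K
    rw [map_mul, map_mul, map_mul, map_pow, homPoly_map h g.num n (Nat.lt_succ_self n),
      homPoly_map h g.denom m (Nat.lt_succ_self m), h1, ← h2, ← h3]
    ring
  -- divisibility facts
  have hPA : h.num ∣ homPoly h g.num n := by
    rw [homPoly_first]
    have : g.num.coeff 0 = 0 := by
      rw [Polynomial.coeff_zero_eq_eval_zero]; exact hg.2
    rw [this, map_zero, zero_mul, zero_add]
    exact dvd_mul_right _ _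
  have hPQ : IsCoprime h.num h.denom := h.isCoprime_num_denom
  have hq0ne : g.denom.coeff 0 ≠ 0 := by
    intro h0
    have hx1 : X ∣ g.num := X_dvd_iff.mpr (by
      rw [Polynomial.coeff_zero_eq_eval_zero]; exact hg.2)
    have hx2 : X ∣ g.denom := X_dvd_iff.mpr h0
    exact Polynomial.not_isUnit_X (g.isCoprime_num_denom.isUnit_of_dvd' hx1 hx2)
  have hCq : IsCoprime h.num (C (g.denom.coeff 0)) :=
    ⟨0, C (g.denom.coeff 0)⁻¹, by
      rw [zero_mul, zero_add, ← C_mul, inv_mul_cancel₀ hq0ne, C_1]⟩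
  have hcopB : IsCoprime h.num (homPoly h g.denom m) := by
    rw [homPoly_first]
    exact (hCq.mul_right (hPQ.pow_right)).add_mul_left_right _
  have hcop1 : IsCoprime h.num (homPoly h g.denom m * h.denom ^ (n - m)) :=
    hcopB.mul_right (hPQ.pow_right)
  have hgnum_ne : g.num ≠ 0 := by
    intro h0
    rw [hn, h0, natDegree_zero] at hnm
    exact Nat.not_lt_zero _ hnm
  have hpn_ne : g.num.coeff n ≠ 0 := by
    rw [hn, ← Polynomial.leadingCoeff]
    exact Polynomial.leadingCoeff_ne_zero.mpr hgnum_ne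
  have hCp : IsCoprime h.denom (C (g.num.coeff n)) :=
    ⟨0, C (g.num.coeff n)⁻¹, by
      rw [zero_mul, zero_add, ← C_mul, inv_mul_cancel₀ hpn_ne, C_1]⟩
  have hcop2 : IsCoprime h.denom (homPoly h g.num n) := by
    rw [homPoly_last h g.num n (by omega)]
    exact (hCp.mul_right (hPQ.symm.pow_right)).add_mul_left_right _
  constructor
  · refine hcop1.dvd_of_dvd_mul_right ?_
    rw [key]
    exact hPA.mul_right _
  · refine hcop2.dvd_of_dvd_mul_left ?_
    rw [← key]
    exact Dvd.dvd.mul_left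
      ((dvd_pow_self h.denom (by omega : n - m ≠ 0)).mul_left _) _
end

section
/- Let K be a field and H an infinite subgroup of the group Aut_K K(x) of K-algebra automorphisms of the rational function field K(x) = RatFunc K. Then the fixed field of H is K; that is, every f ∈ K(x) satisfying σ(f) = f for all σ ∈ H lies in the image of the structure map K → K(x) (f is constant). -/
open Polynomial

lemma ratfunc_alg_equiv_algebraMap {K : Type*} [Field K] (σ : RatFunc K ≃ₐ[K] RatFunc K)
    (p : Polynomial K) :
    σ (algebraMap (Polynomial K) (RatFunc K) p) = Polynomial.aeval (σ RatFunc.X) p := by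
  have h : (σ.toAlgHom.comp (IsScalarTower.toAlgHom K (Polynomial K) (RatFunc K)))
      = Polynomial.aeval (σ RatFunc.X) := by
    apply Polynomial.algHom_ext
    simp [RatFunc.algebraMap_X]
  exact congrArg (fun φ => φ p) h

lemma ratfunc_alg_equiv_apply {K : Type*} [Field K] (σ : RatFunc K ≃ₐ[K] RatFunc K)
    (f : RatFunc K) :
    σ f = Polynomial.aeval (σ RatFunc.X) f.num / Polynomial.aeval (σ RatFunc.X) f.denom := by
  conv_lhs => rw [← RatFunc.num_div_denom f]
  rw [map_div₀, ratfunc_alg_equiv_algebraMap, ratfunc_alg_equiv_algebraMap]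

lemma ratfunc_alg_equiv_injective_X {K : Type*} [Field K]
    (σ τ : RatFunc K ≃ₐ[K] RatFunc K) (h : σ RatFunc.X = τ RatFunc.X) : σ = τ := by
  ext f
  rw [ratfunc_alg_equiv_apply σ f, ratfunc_alg_equiv_apply τ f, h]

/-- The fixed field of an infinite group of `K`-automorphisms of `K(x)` is `K` itself. -/
theorem fixedField_of_infinite_subgroup_eq_bot {K : Type*} [Field K]
    (H : Subgroup (RatFunc K ≃ₐ[K] RatFunc K)) (hH : Infinite H) :
    IntermediateField.fixedField H = ⊥ := by
  by_contra hne
  have hlt : (⊥ : IntermediateField K (RatFunc K)) < IntermediateField.fixedField H :=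
    lt_of_le_of_ne bot_le (Ne.symm hne)
  obtain ⟨f, hfF, hf⟩ := SetLike.exists_of_lt hlt
  -- the polynomial (num f)(Y) - f * (denom f)(Y) over RatFunc K
  set P : Polynomial (RatFunc K) :=
    (f.num).map (algebraMap K (RatFunc K)) - Polynomial.C f * (f.denom).map (algebraMap K (RatFunc K)) with hP
  have hPne : P ≠ 0 := by
    intro h0
    have heq : (f.num).map (algebraMap K (RatFunc K))
        = Polynomial.C f * (f.denom).map (algebraMap K (RatFunc K)) := by
      rwa [sub_eq_zero] at h0
    have hcoeff := congrArg (fun p => Polynomial.coeff p f.denom.natDegree) heq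
    simp only [Polynomial.coeff_map, Polynomial.coeff_C_mul] at hcoeff
    have hlead : f.denom.coeff f.denom.natDegree = 1 := (RatFunc.monic_denom f)
    rw [hlead, map_one, mul_one] at hcoeff
    apply hf
    rw [IntermediateField.mem_bot]
    exact ⟨f.num.coeff f.denom.natDegree, hcoeff⟩
  -- every σ X for σ ∈ H is a root of P
  have hroot : ∀ σ : H, P.IsRoot ((σ : RatFunc K ≃ₐ[K] RatFunc K) RatFunc.X) := by
    intro σ
    have hσf : (σ : RatFunc K ≃ₐ[K] RatFunc K) f = f := hfF σ
    have h1 := ratfunc_alg_equiv_apply (σ : RatFunc K ≃ₐ[K] RatFunc K) f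
    rw [hσf] at h1
    have hd : Polynomial.aeval ((σ : RatFunc K ≃ₐ[K] RatFunc K) RatFunc.X) f.denom ≠ 0 := by
      rw [← ratfunc_alg_equiv_algebraMap]
      simp [RatFunc.algebraMap_ne_zero (RatFunc.denom_ne_zero f)]
    have h2 : Polynomial.aeval ((σ : RatFunc K ≃ₐ[K] RatFunc K) RatFunc.X) f.num
        = f * Polynomial.aeval ((σ : RatFunc K ≃ₐ[K] RatFunc K) RatFunc.X) f.denom := by
      field_simp at h1
      linear_combination -h1
    simp only [Polynomial.IsRoot, hP, Polynomial.eval_sub, Polynomial.eval_mul,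
      Polynomial.eval_C, Polynomial.eval_map, ← Polynomial.aeval_def, h2, sub_self]
  -- hence H injects into the finite set of roots of P
  have hfin : Set.Finite { x : RatFunc K | P.IsRoot x } := Polynomial.finite_setOf_isRoot hPne
  have : Finite H := by
    have := hfin.to_subtype
    exact Finite.of_injective (fun σ : H => (⟨(σ : RatFunc K ≃ₐ[K] RatFunc K) RatFunc.X,
      hroot σ⟩ : { x : RatFunc K | P.IsRoot x })) (by
        intro σ τ h
        have := ratfunc_alg_equiv_injective_X _ _ (Subtype.ext_iff.mp h)
        exact Subtype.ext this)
  exact absurd this (by rw [← not_infinite_iff_finite] at this; exact fun _ => this hH)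
end

section
/- Let K be a field and H a finite subgroup of Aut_K K(x) of order m. Then there exists a nonconstant f ∈ K(x) with deg f = m such that Fix(H) equals the intermediate field K(f) generated by f over K inside K(x); moreover the field extension Fix(H) ⊆ K(x) is normal. -/
open Polynomial

open Module

namespace LurothAux
variable {K : Type*} [Field K]

variable {K : Type*} [Field K]

lemma aeval_X_eq (p : Polynomial K) :
    Polynomial.aeval (RatFunc.X : RatFunc K) p = algebraMap (Polynomial K) (RatFunc K) p := by
  have h : (Polynomial.aeval (RatFunc.X : RatFunc K) : Polynomial K →ₐ[K] RatFunc K)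
      = IsScalarTower.toAlgHom K (Polynomial K) (RatFunc K) := by
    apply Polynomial.algHom_ext
    simp [RatFunc.algebraMap_X]
  exact DFunLike.congr_fun h p

lemma aeval_X_eq_zero {p : Polynomial K}
    (hp : Polynomial.aeval (RatFunc.X : RatFunc K) p = 0) : p = 0 := by
  apply RatFunc.algebraMap_injective K
  rw [← aeval_X_eq, hp, map_zero]

lemma adjoin_X_eq_top (F : IntermediateField K (RatFunc K)) :
    IntermediateField.adjoin F {(RatFunc.X : RatFunc K)} = ⊤ := by
  rw [eq_top_iff]
  rintro z -
  have hmem : ∀ p : Polynomial K, algebraMap (Polynomial K) (RatFunc K) p ∈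
      IntermediateField.adjoin F {(RatFunc.X : RatFunc K)} := by
    intro p
    rw [← aeval_X_eq]
    induction p using Polynomial.induction_on' with
    | add p q hp hq => rw [map_add]; exact add_mem hp hq
    | monomial i a =>
      rw [Polynomial.aeval_monomial]
      exact mul_mem
        (IntermediateField.algebraMap_mem _ (⟨algebraMap K (RatFunc K) a,
          IntermediateField.algebraMap_mem F a⟩ : F))
        (pow_mem (IntermediateField.mem_adjoin_simple_self F _) i)
  rw [← RatFunc.num_div_denom z]
  exact div_mem (hmem _) (hmem _)

lemma one_le_deg {f : RatFunc K} (hf : ∀ c : K, f ≠ algebraMap K (RatFunc K) c) :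
    1 ≤ f.deg := by
  by_contra h
  rw [not_le, Nat.lt_one_iff, RatFunc.deg, Nat.max_eq_zero_iff] at h
  obtain ⟨a, ha⟩ := Polynomial.natDegree_eq_zero.mp h.1
  obtain ⟨b, hb⟩ := Polynomial.natDegree_eq_zero.mp h.2
  have hb0 : b ≠ 0 := by
    intro h0; exact RatFunc.denom_ne_zero f (by rw [← hb, h0, map_zero])
  refine hf (a / b) ?_
  have := RatFunc.num_div_denom f
  rw [← ha, ← hb] at this
  have hC : ∀ c : K, algebraMap (Polynomial K) (RatFunc K) (Polynomial.C c)
      = algebraMap K (RatFunc K) c := by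
    intro c
    rw [← Polynomial.algebraMap_eq, ← IsScalarTower.algebraMap_apply]
  rw [← this, hC, hC, map_div₀]

lemma deg_ne_zero {f : RatFunc K} (hf : ∀ c : K, f ≠ algebraMap K (RatFunc K) c) : f ≠ 0 := by
  intro h; exact hf 0 (by rw [h, map_zero])

lemma lead_pair {f : RatFunc K} (hf0 : f ≠ 0) :
    f.num.coeff f.deg ≠ 0 ∨ f.denom.coeff f.deg ≠ 0 := by
  rcases le_total f.num.natDegree f.denom.natDegree with h | h
  · right
    have : f.deg = f.denom.natDegree := max_eq_right h
    rw [this]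
    exact mt Polynomial.leadingCoeff_eq_zero.mp (RatFunc.denom_ne_zero f)
  · left
    have : f.deg = f.num.natDegree := max_eq_left h
    rw [this]
    exact mt Polynomial.leadingCoeff_eq_zero.mp (mt RatFunc.num_eq_zero_iff.mp hf0)

/-- annihilating polynomial of `X` over an intermediate field containing `f`. -/
noncomputable def theta (F : IntermediateField K (RatFunc K)) (f : RatFunc K) (hfF : f ∈ F) :
    Polynomial F :=
  f.num.map (algebraMap K F) - Polynomial.C (⟨f, hfF⟩ : F) * f.denom.map (algebraMap K F)

lemma theta_coeff (F : IntermediateField K (RatFunc K)) (f : RatFunc K) (hfF : f ∈ F) (j : ℕ) :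
    (theta F f hfF).coeff j
      = algebraMap K F (f.num.coeff j) - (⟨f, hfF⟩ : F) * algebraMap K F (f.denom.coeff j) := by
  simp [theta, Polynomial.coeff_map]

lemma theta_aeval (F : IntermediateField K (RatFunc K)) (f : RatFunc K) (hfF : f ∈ F) :
    Polynomial.aeval (RatFunc.X : RatFunc K) (theta F f hfF) = 0 := by
  have hd : algebraMap (Polynomial K) (RatFunc K) f.denom ≠ 0 :=
    RatFunc.algebraMap_ne_zero (RatFunc.denom_ne_zero f)
  rw [theta, map_sub, map_mul, Polynomial.aeval_map_algebraMap, Polynomial.aeval_map_algebraMap,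
    Polynomial.aeval_C, aeval_X_eq, aeval_X_eq]
  have hmid : algebraMap F (RatFunc K) (⟨f, hfF⟩ : F) = f := rfl
  rw [hmid, sub_eq_zero]
  exact (div_eq_iff hd).mp (RatFunc.num_div_denom f)

lemma theta_natDegree (F : IntermediateField K (RatFunc K)) (f : RatFunc K) (hfF : f ∈ F)
    (hf : ∀ c : K, f ≠ algebraMap K (RatFunc K) c) :
    (theta F f hfF).natDegree = f.deg ∧ theta F f hfF ≠ 0 := by
  have hf0 : f ≠ 0 := deg_ne_zero hf
  have hcn : (theta F f hfF).coeff f.deg ≠ 0 := by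
    rw [theta_coeff]
    intro hc
    rw [sub_eq_zero] at hc
    have hcL : algebraMap K (RatFunc K) (f.num.coeff f.deg)
        = f * algebraMap K (RatFunc K) (f.denom.coeff f.deg) := by
      have h2 := congrArg (algebraMap F (RatFunc K)) hc
      rw [map_mul, ← IsScalarTower.algebraMap_apply K F (RatFunc K),
        ← IsScalarTower.algebraMap_apply K F (RatFunc K)] at h2
      have hmid : algebraMap F (RatFunc K) (⟨f, hfF⟩ : F) = f := rfl
      rwa [hmid] at h2
    by_cases hDn : f.denom.coeff f.deg = 0
    · rw [hDn, map_zero, mul_zero] at hcL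
      have hNn : f.num.coeff f.deg = 0 := by
        have := (algebraMap K (RatFunc K)).injective
        exact this (by rw [hcL, map_zero])
      rcases lead_pair hf0 with h | h
      · exact h hNn
      · exact h hDn
    · refine hf (f.num.coeff f.deg / f.denom.coeff f.deg) ?_
      have hDne : algebraMap K (RatFunc K) (f.denom.coeff f.deg) ≠ 0 :=
        fun h0 => hDn ((algebraMap K (RatFunc K)).injective (by rw [h0, map_zero]))
      rw [map_div₀, hcL, mul_div_assoc, div_self hDne, mul_one]
  have hdegle : (theta F f hfF).natDegree ≤ f.deg := by
    rw [Polynomial.natDegree_le_iff_coeff_eq_zero]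
    intro j hj
    rw [theta_coeff, Polynomial.coeff_eq_zero_of_natDegree_lt (lt_of_le_of_lt (le_max_left _ _) hj),
      Polynomial.coeff_eq_zero_of_natDegree_lt (lt_of_le_of_lt (le_max_right _ _) hj)]
    simp
  have hne : theta F f hfF ≠ 0 := fun h0 => hcn (by rw [h0, Polynomial.coeff_zero])
  exact ⟨le_antisymm hdegle (Polynomial.le_natDegree_of_ne_zero hcn), hne⟩

lemma prim_aux {f : RatFunc K} (hf : ∀ c : K, f ≠ algebraMap K (RatFunc K) c) {r : Polynomial K}
    (hr : ∀ j : ℕ, r ∣ (f.num.coeff j • f.denom - f.denom.coeff j • f.num)) : IsUnit r := by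
  by_contra hu
  set M := AlgebraicClosure K
  set N := f.num
  set D := f.denom
  have hf0 : f ≠ 0 := deg_ne_zero hf
  have hN0 : N ≠ 0 := fun h => hf0 (RatFunc.num_eq_zero_iff.mp h)
  have hD0 : D ≠ 0 := RatFunc.denom_ne_zero f
  -- find a root α of r in M (α arbitrary if r = 0)
  have hα : ∃ α : M, Polynomial.aeval α r = 0 := by
    by_cases hr0 : r = 0
    · exact ⟨0, by rw [hr0, map_zero]⟩
    · refine IsAlgClosed.exists_aeval_eq_zero M r ?_
      intro hdeg
      exact hu (Polynomial.isUnit_iff_degree_eq_zero.mpr hdeg)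
  obtain ⟨α, hα⟩ := hα
  have hrel : ∀ j : ℕ, algebraMap K M (N.coeff j) * Polynomial.aeval α D
      = algebraMap K M (D.coeff j) * Polynomial.aeval α N := by
    intro j
    obtain ⟨w, hw⟩ := hr j
    have h0 : Polynomial.aeval α (N.coeff j • D - D.coeff j • N) = 0 := by
      rw [hw, map_mul, hα, zero_mul]
    rwa [map_sub, Algebra.smul_def, Algebra.smul_def, map_mul, map_mul,
      Polynomial.algebraMap_eq, Polynomial.aeval_C, Polynomial.aeval_C, sub_eq_zero] at h0
  -- proportionality of mapped polynomials
  have hprop : Polynomial.aeval α D • N.map (algebraMap K M)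
      = Polynomial.aeval α N • D.map (algebraMap K M) := by
    ext j
    simp only [Polynomial.coeff_smul, Polynomial.coeff_map, smul_eq_mul]
    rw [mul_comm, mul_comm (Polynomial.aeval α N) _]
    exact hrel j
  -- coprimality
  obtain ⟨u, v, huv⟩ := RatFunc.isCoprime_num_denom f
  have hinj : Function.Injective (algebraMap K M) := (algebraMap K M).injective
  have hnotboth : ¬(Polynomial.aeval α N = 0 ∧ Polynomial.aeval α D = 0) := by
    rintro ⟨h1, h2⟩
    have := congrArg (Polynomial.aeval α) huv
    rw [map_add, map_mul, map_mul, h1, h2, mul_zero, mul_zero, add_zero, map_one] at this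
    simp at this
  by_cases hDα : Polynomial.aeval α D = 0
  · have hNα : Polynomial.aeval α N ≠ 0 := fun h => hnotboth ⟨h, hDα⟩
    rw [hDα, zero_smul] at hprop
    have : D.map (algebraMap K M) = 0 := by
      have := hprop.symm
      exact (smul_eq_zero.mp this).resolve_left hNα
    exact hD0 (Polynomial.map_eq_zero_iff hinj |>.mp this)
  · by_cases hNα : Polynomial.aeval α N = 0
    · rw [hNα, zero_smul] at hprop
      have : N.map (algebraMap K M) = 0 := (smul_eq_zero.mp hprop).resolve_left hDα
      exact hN0 (Polynomial.map_eq_zero_iff hinj |>.mp this)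
    · -- both nonzero: degrees equal and ≥ 1, find common root, contradict coprimality
      have hdegN : (N.map (algebraMap K M)).natDegree = N.natDegree :=
        Polynomial.natDegree_map_eq_of_injective hinj N
      have hdegD : (D.map (algebraMap K M)).natDegree = D.natDegree :=
        Polynomial.natDegree_map_eq_of_injective hinj D
      have hND : N.natDegree = D.natDegree := by
        have h1 := congrArg Polynomial.natDegree hprop
        rwa [Polynomial.smul_eq_C_mul, Polynomial.smul_eq_C_mul, Polynomial.natDegree_C_mul hDα,
          Polynomial.natDegree_C_mul hNα, hdegN, hdegD] at h1
      have hdD : 1 ≤ D.natDegree := by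
        have := one_le_deg hf
        rw [RatFunc.deg, hND, max_self] at this
        exact this
      obtain ⟨β, hβ⟩ : ∃ β : M, (D.map (algebraMap K M)).IsRoot β := by
        apply IsAlgClosed.exists_root
        rw [Polynomial.degree_map_eq_of_injective hinj]
        intro h
        rw [Polynomial.degree_eq_natDegree hD0] at h
        have h0 : D.natDegree = 0 := by exact_mod_cast h
        omega
      have hNβ : (N.map (algebraMap K M)).eval β = 0 := by
        have := congrArg (Polynomial.eval β) hprop
        rw [Polynomial.eval_smul, Polynomial.eval_smul, Polynomial.IsRoot.def.mp hβ,
          smul_eq_mul, smul_eq_mul, mul_zero] at this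
        exact (mul_eq_zero.mp this).resolve_left hDα
      have := congrArg (fun p => Polynomial.eval β (Polynomial.map (algebraMap K M) p)) huv
      simp only [Polynomial.map_add, Polynomial.map_mul, Polynomial.map_one, Polynomial.eval_add,
        Polynomial.eval_mul, Polynomial.eval_one, hNβ, Polynomial.IsRoot.def.mp hβ] at this
      rw [show f.num = N from rfl, show f.denom = D from rfl, hNβ, Polynomial.IsRoot.def.mp hβ,
        mul_zero, mul_zero, add_zero] at this
      simp at this


/-- Swap the two variables of `K[X][Y]`. -/
noncomputable def pswap : Polynomial (Polynomial K) →+* Polynomial (Polynomial K) :=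
  Polynomial.eval₂RingHom
    (Polynomial.mapRingHom (Polynomial.C : K →+* Polynomial K)) (Polynomial.C Polynomial.X)

lemma coeff_pswap (q : Polynomial (Polynomial K)) (a b : ℕ) :
    ((pswap q).coeff a).coeff b = (q.coeff b).coeff a := by
  induction q using Polynomial.induction_on' with
  | add p q hp hq => simp [map_add, hp, hq]
  | monomial j r =>
    rw [pswap, Polynomial.coe_eval₂RingHom, Polynomial.eval₂_monomial]
    rw [← map_pow, Polynomial.coeff_mul_C, Polynomial.coe_mapRingHom, Polynomial.coeff_map,
      Polynomial.coeff_monomial]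
    rw [Polynomial.coeff_C_mul, Polynomial.coeff_X_pow]
    by_cases h : j = b
    · subst h; simp
    · rw [if_neg h, if_neg (fun hh => h hh.symm)]
      simp

lemma pswap_pswap (q : Polynomial (Polynomial K)) : pswap (pswap q) = q := by
  ext a b
  rw [coeff_pswap, coeff_pswap]

lemma pswap_C (r : Polynomial K) : pswap (Polynomial.C r) = r.map Polynomial.C := by
  rw [pswap, Polynomial.coe_eval₂RingHom, Polynomial.eval₂_C, Polynomial.coe_mapRingHom]

lemma pswap_map_C (r : Polynomial K) : pswap (r.map Polynomial.C) = Polynomial.C r := by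
  rw [← pswap_C, pswap_pswap]

lemma pswap_eq_zero_iff {q : Polynomial (Polynomial K)} : pswap q = 0 ↔ q = 0 := by
  constructor
  · intro h
    rw [← pswap_pswap q, h, map_zero]
  · intro h; rw [h, map_zero]

lemma le_natDegree_pswap {q : Polynomial (Polynomial K)} {a b : ℕ}
    (h : (q.coeff b).coeff a ≠ 0) : a ≤ (pswap q).natDegree := by
  apply Polynomial.le_natDegree_of_ne_zero
  intro h0
  rw [← coeff_pswap] at h
  rw [h0] at h
  simp at h

lemma finrank_top_eq (F : IntermediateField K (RatFunc K)) :
    finrank F (⊤ : IntermediateField F (RatFunc K)) = finrank F (RatFunc K) :=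
  (IntermediateField.topEquiv (F := F) (E := RatFunc K)).toLinearEquiv.finrank_eq

lemma finiteDimensional_and_finrank_le (F : IntermediateField K (RatFunc K)) {q : Polynomial F}
    (hq : q ≠ 0) (hroot : Polynomial.aeval (RatFunc.X : RatFunc K) q = 0) :
    FiniteDimensional F (RatFunc K) ∧ finrank F (RatFunc K) ≤ q.natDegree := by
  have halg : IsAlgebraic F (RatFunc.X : RatFunc K) := ⟨q, hq, hroot⟩
  have hint : IsIntegral F (RatFunc.X : RatFunc K) := halg.isIntegral
  have htop := adjoin_X_eq_top F
  have hfd1 : FiniteDimensional F (IntermediateField.adjoin F {(RatFunc.X : RatFunc K)}) :=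
    IntermediateField.adjoin.finiteDimensional hint
  rw [htop] at hfd1
  have hfd : FiniteDimensional F (RatFunc K) :=
    Module.Finite.equiv (IntermediateField.topEquiv (F := F) (E := RatFunc K)).toLinearEquiv
  refine ⟨hfd, ?_⟩
  have h1 : finrank F (IntermediateField.adjoin F {(RatFunc.X : RatFunc K)})
      = (minpoly F (RatFunc.X : RatFunc K)).natDegree := IntermediateField.adjoin.finrank hint
  rw [htop, finrank_top_eq] at h1
  rw [h1]
  exact Polynomial.natDegree_le_natDegree
    (Polynomial.degree_le_of_dvd (minpoly.dvd F _ hroot) hq)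

lemma finrank_eq_minpoly (F : IntermediateField K (RatFunc K))
    [FiniteDimensional F (RatFunc K)] :
    finrank F (RatFunc K) = (minpoly F (RatFunc.X : RatFunc K)).natDegree := by
  have hint : IsIntegral F (RatFunc.X : RatFunc K) := IsIntegral.of_finite F _
  have h1 : finrank F (IntermediateField.adjoin F {(RatFunc.X : RatFunc K)})
      = (minpoly F (RatFunc.X : RatFunc K)).natDegree := IntermediateField.adjoin.finrank hint
  rw [adjoin_X_eq_top F, finrank_top_eq] at h1
  exact h1
lemma deg_le_natDegree_minpoly (F : IntermediateField K (RatFunc K))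
    [FiniteDimensional F (RatFunc K)] {f : RatFunc K} {i : ℕ}
    (hfi : algebraMap F (RatFunc K) ((minpoly F (RatFunc.X : RatFunc K)).coeff i) = f)
    (hf : ∀ c : K, f ≠ algebraMap K (RatFunc K) c) :
    f.deg ≤ (minpoly F (RatFunc.X : RatFunc K)).natDegree := by
  classical
  letI : NormalizedGCDMonoid (Polynomial K) :=
    UniqueFactorizationMonoid.toNormalizedGCDMonoid _
  set P := minpoly F (RatFunc.X : (RatFunc K)) with hP
  set m := P.natDegree
  set N := f.num with hN
  set D := f.denom with hD
  set n := f.deg with hn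
  have injRL : Function.Injective (algebraMap (Polynomial K) (RatFunc K)) :=
    RatFunc.algebraMap_injective K
  have injFL : Function.Injective (algebraMap F (RatFunc K)) := (algebraMap F (RatFunc K)).injective
  have hf0 : f ≠ 0 := deg_ne_zero hf
  have hD0 : D ≠ 0 := RatFunc.denom_ne_zero f
  have hd0 : algebraMap (Polynomial K) (RatFunc K) D ≠ 0 := fun h0 => hD0 (injRL (by rw [h0, map_zero]))
  have hNf : algebraMap (Polynomial K) (RatFunc K) N = f * algebraMap (Polynomial K) (RatFunc K) D :=
    (div_eq_iff hd0).mp (RatFunc.num_div_denom f)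
  have hint : IsIntegral F (RatFunc.X : (RatFunc K)) := IsIntegral.of_finite F _
  have hPmonic : P.Monic := minpoly.monic hint
  set P' := P.map (algebraMap F (RatFunc K)) with hP'
  have hP'monic : P'.Monic := hPmonic.map _
  have hP'deg : P'.natDegree = m := hPmonic.natDegree_map _
  have hP'0 : P' ≠ 0 := hP'monic.ne_zero
  have hfF : f ∈ F := by rw [← hfi]; exact (P.coeff i).2
  -- θ over F and its image in (RatFunc K)[Y]
  have hθprop := theta_natDegree F f hfF hf
  have Pdvdθ : P ∣ theta F f hfF := minpoly.dvd F _ (theta_aeval F f hfF)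
  set θL := (theta F f hfF).map (algebraMap F (RatFunc K)) with hθL
  have hθLeq : θL = N.map (algebraMap K (RatFunc K)) - Polynomial.C f * D.map (algebraMap K (RatFunc K)) := by
    rw [hθL, theta, Polynomial.map_sub, Polynomial.map_mul, Polynomial.map_C,
      Polynomial.map_map, Polynomial.map_map, ← IsScalarTower.algebraMap_eq]
    rfl
  -- the bivariate polynomial h
  set h : Polynomial (Polynomial K) :=
    Polynomial.C D * N.map (Polynomial.C : K →+* Polynomial K)
      - Polynomial.C N * D.map (Polynomial.C : K →+* Polynomial K) with hhdef
  have hhcoeff : ∀ j : ℕ, h.coeff j = N.coeff j • D - D.coeff j • N := by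
    intro j
    rw [hhdef, Polynomial.coeff_sub, Polynomial.coeff_C_mul, Polynomial.coeff_C_mul,
      Polynomial.coeff_map, Polynomial.coeff_map, Polynomial.smul_eq_C_mul,
      Polynomial.smul_eq_C_mul, mul_comm D, mul_comm N]
  have hmapmap : ∀ A : Polynomial K,
      (A.map (Polynomial.C : K →+* Polynomial K)).map (algebraMap (Polynomial K) (RatFunc K))
        = A.map (algebraMap K (RatFunc K)) := by
    intro A
    rw [Polynomial.map_map, ← Polynomial.algebraMap_eq, ← IsScalarTower.algebraMap_eq]
  have hmap : h.map (algebraMap (Polynomial K) (RatFunc K))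
      = Polynomial.C (algebraMap (Polynomial K) (RatFunc K) D) * θL := by
    rw [hhdef, Polynomial.map_sub, Polynomial.map_mul, Polynomial.map_mul, Polynomial.map_C,
      Polynomial.map_C, hmapmap, hmapmap, hθLeq, hNf]
    rw [mul_sub, Polynomial.C_mul]
    ring
  -- h is primitive
  have hprim : h.IsPrimitive := by
    intro r hdvd
    exact prim_aux hf (fun j => by
      rw [← hhcoeff]; exact (Polynomial.C_dvd_iff_dvd_coeff r h).mp hdvd j)
  -- degree of h
  have hθL0 : θL ≠ 0 := fun h0 => hθprop.2 ((Polynomial.map_eq_zero_iff injFL).mp h0)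
  have hθLdeg : θL.natDegree = n := by
    rw [hθL, Polynomial.natDegree_map_eq_of_injective injFL, hθprop.1]
  have hCd0 : (Polynomial.C (algebraMap (Polynomial K) (RatFunc K) D)) ≠ 0 :=
    fun h0 => hd0 (Polynomial.C_eq_zero.mp h0)
  have hhmap0 : h.map (algebraMap (Polynomial K) (RatFunc K)) ≠ 0 := by
    rw [hmap]; exact mul_ne_zero hCd0 hθL0
  have hh0 : h ≠ 0 := fun h0 => hhmap0 (by rw [h0, Polynomial.map_zero])
  have hhdeg : h.natDegree = n := by
    rw [← Polynomial.natDegree_map_eq_of_injective injRL h, hmap,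
      Polynomial.natDegree_C_mul hd0, hθLdeg]
  -- clear denominators of P'
  obtain ⟨c, hc⟩ :=
    IsLocalization.integerNormalization_map_to_map (nonZeroDivisors (Polynomial K)) P'
  set p₀ := IsLocalization.integerNormalization (nonZeroDivisors (Polynomial K)) P' with hp₀
  set κ := algebraMap (Polynomial K) (RatFunc K) (c : Polynomial K) with hκ
  have hκ0 : κ ≠ 0 := fun h0 => nonZeroDivisors.coe_ne_zero c (injRL (by rw [map_zero, ← hκ, h0]))
  have hcsmul : p₀.map (algebraMap (Polynomial K) (RatFunc K)) = Polynomial.C κ * P' := by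
    rw [hc]
    ext j
    rw [Polynomial.coeff_smul, Polynomial.coeff_C_mul, Algebra.smul_def]
  have hp₀0 : p₀ ≠ 0 := by
    intro h0
    rw [h0, Polynomial.map_zero] at hcsmul
    exact mul_ne_zero (fun hh => hκ0 (Polynomial.C_eq_zero.mp hh)) hP'0 hcsmul.symm
  set p := p₀.primPart with hpdef
  have hpprim : p.IsPrimitive := p₀.isPrimitive_primPart
  have hγ0 : p₀.content ≠ 0 := fun h0 => hp₀0 (Polynomial.content_eq_zero_iff.mp h0)
  set γL := algebraMap (Polynomial K) (RatFunc K) p₀.content with hγL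
  have hγL0 : γL ≠ 0 := fun h0 => hγ0 (injRL (by rw [map_zero, ← hγL, h0]))
  set e := γL⁻¹ * κ with he
  have he0 : e ≠ 0 := mul_ne_zero (inv_ne_zero hγL0) hκ0
  have hpmap : p.map (algebraMap (Polynomial K) (RatFunc K)) = Polynomial.C e * P' := by
    have hfac := p₀.eq_C_content_mul_primPart
    have := congrArg (Polynomial.map (algebraMap (Polynomial K) (RatFunc K))) hfac
    rw [Polynomial.map_mul, Polynomial.map_C, hcsmul] at this
    have key : Polynomial.C γL * (Polynomial.C e * P') = Polynomial.C κ * P' := by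
      rw [← mul_assoc, ← Polynomial.C_mul, he, mul_inv_cancel_left₀ hγL0]
    have h2 : Polynomial.C γL * (p.map (algebraMap (Polynomial K) (RatFunc K)))
        = Polynomial.C γL * (Polynomial.C e * P') := by
      rw [← this, key]
    exact mul_left_cancel₀ (fun h0 => hγL0 (Polynomial.C_eq_zero.mp h0)) h2
  have hcoeffe : ∀ j : ℕ, algebraMap (Polynomial K) (RatFunc K) (p.coeff j) = e * P'.coeff j := by
    intro j
    have := congrArg (fun q => Polynomial.coeff q j) hpmap
    simpa [Polynomial.coeff_map, Polynomial.coeff_C_mul] using this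
  -- the two distinguished coefficients of p
  have hbval : algebraMap (Polynomial K) (RatFunc K) (p.coeff m) = e := by
    rw [hcoeffe m, ← hP'deg, hP'monic.coeff_natDegree, mul_one]
  have hb0 : p.coeff m ≠ 0 := fun h0 => he0 (by rw [← hbval, h0, map_zero])
  have haval : algebraMap (Polynomial K) (RatFunc K) (p.coeff i) = e * f := by
    rw [hcoeffe i, hP', Polynomial.coeff_map, hfi]
  have ha0 : p.coeff i ≠ 0 := fun h0 => (mul_ne_zero he0 hf0) (by rw [← haval, h0, map_zero])
  have hab : p.coeff i * D = p.coeff m * N := by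
    apply injRL
    rw [map_mul, map_mul, haval, hbval, hNf]
    ring
  have hDb : D ∣ p.coeff m :=
    (RatFunc.isCoprime_num_denom f).symm.dvd_of_dvd_mul_right ⟨p.coeff i, by rw [← hab]; ring⟩
  have hNa : N ∣ p.coeff i :=
    (RatFunc.isCoprime_num_denom f).dvd_of_dvd_mul_right ⟨p.coeff m, by rw [hab]; ring⟩
  have hdega : N.natDegree ≤ (p.coeff i).natDegree := Polynomial.natDegree_le_of_dvd hNa ha0
  have hdegb : D.natDegree ≤ (p.coeff m).natDegree := Polynomial.natDegree_le_of_dvd hDb hb0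
  -- Gauss: p ∣ h
  obtain ⟨w, hw⟩ := Pdvdθ
  have hdvdL : p.map (algebraMap (Polynomial K) (RatFunc K)) ∣ h.map (algebraMap (Polynomial K) (RatFunc K)) := by
    refine ⟨Polynomial.C (e⁻¹ * algebraMap (Polynomial K) (RatFunc K) D) * w.map (algebraMap F (RatFunc K)), ?_⟩
    rw [hmap, hθL, hw, Polynomial.map_mul, hpmap]
    rw [mul_comm (Polynomial.C e) P', mul_assoc, ← mul_assoc (Polynomial.C e),
      ← Polynomial.C_mul, show e * (e⁻¹ * algebraMap (Polynomial K) (RatFunc K) D)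
        = algebraMap (Polynomial K) (RatFunc K) D from by field_simp]
    ring
  obtain ⟨u, hu⟩ := hpprim.dvd_of_fraction_map_dvd_fraction_map hdvdL
  have hp0 : p ≠ 0 := fun h0 => hh0 (by rw [hu, h0, zero_mul])
  have hu0 : u ≠ 0 := fun h0 => hh0 (by rw [hu, h0, mul_zero])
  -- swap variables
  have hswap : pswap h = -h := by
    rw [hhdef, map_sub, map_mul, map_mul, pswap_C, pswap_C, pswap_map_C, pswap_map_C]
    ring
  have hps0 : pswap p ≠ 0 := fun h0 => hp0 (pswap_eq_zero_iff.mp h0)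
  have hpu0 : pswap u ≠ 0 := fun h0 => hu0 (pswap_eq_zero_iff.mp h0)
  have hdeg_add : n = (pswap p).natDegree + (pswap u).natDegree := by
    rw [← Polynomial.natDegree_mul hps0 hpu0, ← map_mul, ← hu, hswap,
      Polynomial.natDegree_neg, hhdeg]
  have hlow : n ≤ (pswap p).natDegree := by
    have h1 : (p.coeff i).natDegree ≤ (pswap p).natDegree :=
      le_natDegree_pswap (b := i) (Polynomial.leadingCoeff_ne_zero.mpr ha0)
    have h2 : (p.coeff m).natDegree ≤ (pswap p).natDegree :=
      le_natDegree_pswap (b := m) (Polynomial.leadingCoeff_ne_zero.mpr hb0)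
    rw [hn, RatFunc.deg]
    exact max_le (le_trans hdega h1) (le_trans hdegb h2)
  have hpu_deg : (pswap u).natDegree = 0 := by omega
  obtain ⟨s, hs⟩ := Polynomial.natDegree_eq_zero.mp hpu_deg
  have hus : u = s.map (Polynomial.C : K →+* Polynomial K) := by
    rw [← pswap_pswap u, ← hs, pswap_C]
  have hsdvd : ∀ j : ℕ, s ∣ (N.coeff j • D - D.coeff j • N) := by
    intro j
    rw [← hhcoeff j]
    have : pswap h = pswap p * Polynomial.C s := by rw [hu, map_mul, hs]
    have hj := congrArg (fun q => Polynomial.coeff q j) this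
    simp only [hswap, Polynomial.coeff_neg, Polynomial.coeff_mul_C] at hj
    exact (dvd_neg.mp ⟨(pswap p).coeff j, by rw [hj]; ring⟩)
  have hsunit : IsUnit s := prim_aux hf hsdvd
  have husdeg : u.natDegree = 0 := by
    rw [hus, Polynomial.natDegree_map_eq_of_injective Polynomial.C_injective,
      Polynomial.natDegree_eq_zero_of_isUnit hsunit]
  have hpdeg : p.natDegree = m := by
    rw [← Polynomial.natDegree_map_eq_of_injective injRL p, hpmap,
      Polynomial.natDegree_C_mul he0, hP'deg]
  have : n = m := by
    rw [← hhdeg, hu, Polynomial.natDegree_mul hp0 hu0, husdeg, hpdeg, add_zero]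
  exact this.le
lemma exists_coeff_not_in_base (F : IntermediateField K (RatFunc K))
    [FiniteDimensional F (RatFunc K)] :
    ∃ i : ℕ, ∀ c : K, algebraMap F (RatFunc K) ((minpoly F (RatFunc.X : RatFunc K)).coeff i)
      ≠ algebraMap K (RatFunc K) c := by
  by_contra hcon
  push_neg at hcon
  choose c hc using hcon
  set P := minpoly F (RatFunc.X : RatFunc K) with hPdef
  have hint : IsIntegral F (RatFunc.X : RatFunc K) := IsIntegral.of_finite F _
  have hP0 : P ≠ 0 := minpoly.ne_zero hint
  set q : Polynomial K := ∑ j ∈ Finset.range (P.natDegree + 1), Polynomial.monomial j (c j)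
    with hqdef
  have hqcoeff : ∀ j, q.coeff j = if j ∈ Finset.range (P.natDegree + 1) then c j else 0 := by
    intro j
    rw [hqdef, Polynomial.finset_sum_coeff]
    rw [show (∑ i ∈ Finset.range (P.natDegree + 1), (Polynomial.monomial i (c i)).coeff j)
      = ∑ i ∈ Finset.range (P.natDegree + 1), if i = j then c i else 0 from
      Finset.sum_congr rfl (fun i _ => Polynomial.coeff_monomial)]
    exact Finset.sum_ite_eq' _ _ _
  have hqmap : q.map (algebraMap K (RatFunc K)) = P.map (algebraMap F (RatFunc K)) := by
    ext j
    rw [Polynomial.coeff_map, Polynomial.coeff_map, hqcoeff]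
    by_cases hj : j ∈ Finset.range (P.natDegree + 1)
    · rw [if_pos hj, hc j]
    · have hdj : P.natDegree < j := by
        simp only [Finset.mem_range] at hj
        omega
      rw [if_neg hj, map_zero, Polynomial.coeff_eq_zero_of_natDegree_lt hdj, map_zero]
  have hq0 : q ≠ 0 := by
    intro h0
    have hPmap : P.map (algebraMap F (RatFunc K)) ≠ 0 := by
      intro hh
      exact hP0 ((Polynomial.map_eq_zero_iff (algebraMap F (RatFunc K)).injective).mp hh)
    exact hPmap (by rw [← hqmap, h0, Polynomial.map_zero])
  have hq_aeval : Polynomial.aeval (RatFunc.X : RatFunc K) q = 0 := by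
    rw [Polynomial.aeval_def, Polynomial.eval₂_eq_eval_map, hqmap,
      ← Polynomial.eval₂_eq_eval_map, ← Polynomial.aeval_def]
    exact minpoly.aeval F _
  exact hq0 (aeval_X_eq_zero hq_aeval)


end LurothAux

open LurothAux in
/-- The fixed field of a finite group `H` of `K`-automorphisms of `K(x)` is generated by a
single rational function of degree `|H|`, and the extension `Fix(H) ⊆ K(x)` is normal. -/
theorem fixedField_of_finite_subgroup {K : Type*} [Field K]
    (H : Subgroup (RatFunc K ≃ₐ[K] RatFunc K)) [Finite H] :
    (∃ f : RatFunc K, 1 ≤ f.deg ∧ f.deg = Nat.card H ∧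
      IntermediateField.fixedField H = IntermediateField.adjoin K {f}) ∧
    Normal (IntermediateField.fixedField H) (RatFunc K) := by
  classical
  have := Fintype.ofFinite H
  set F := IntermediateField.fixedField H with hF
  haveI hfd : FiniteDimensional F (RatFunc K) := by
    have h : FiniteDimensional (FixedPoints.subfield H (RatFunc K)) (RatFunc K) := inferInstance
    exact h
  have hrank : finrank F (RatFunc K) = Fintype.card H :=
    FixedPoints.finrank_eq_card H (RatFunc K)
  set P := minpoly F (RatFunc.X : RatFunc K) with hPdef
  obtain ⟨i, hi⟩ := exists_coeff_not_in_base F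
  set f := algebraMap F (RatFunc K) (P.coeff i) with hfdef
  have hf : ∀ c : K, f ≠ algebraMap K (RatFunc K) c := hi
  have hfF : f ∈ F := by
    rw [hfdef]
    exact SetLike.coe_mem (P.coeff i)
  have hdegpos : 1 ≤ f.deg := one_le_deg hf
  have hm : finrank F (RatFunc K) = P.natDegree := finrank_eq_minpoly F
  have hθ := theta_natDegree F f hfF hf
  have hA : P.natDegree ≤ f.deg := by
    rw [← hθ.1]
    exact Polynomial.natDegree_le_natDegree
      (Polynomial.degree_le_of_dvd (minpoly.dvd F _ (theta_aeval F f hfF)) hθ.2)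
  have hB : f.deg ≤ P.natDegree := deg_le_natDegree_minpoly F hfdef.symm hf
  have hdegP : f.deg = P.natDegree := le_antisymm hB hA
  have hdeg_eq : f.deg = Nat.card H := by
    rw [hdegP, ← hm, hrank, Nat.card_eq_fintype_card]
  set Kf := IntermediateField.adjoin K {f} with hKf
  have hfKf : f ∈ Kf := IntermediateField.mem_adjoin_simple_self K f
  have hKfθ := theta_natDegree Kf f hfKf hf
  obtain ⟨hKffd, hKfrank⟩ :=
    finiteDimensional_and_finrank_le Kf hKfθ.2 (theta_aeval Kf f hfKf)
  rw [hKfθ.1] at hKfrank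
  have hle : Kf ≤ F := IntermediateField.adjoin_le_iff.mpr (Set.singleton_subset_iff.mpr hfF)
  haveI := hKffd
  have heq : Kf = F := IntermediateField.eq_of_le_of_finrank_le' hle (by
    rw [← hm] at hdegP
    exact hKfrank.trans hdegP.le)
  exact ⟨⟨f, hdegpos, hdeg_eq, heq.symm⟩, FixedPoints.normal H (RatFunc K)⟩
end

section
/- Let K be a field and f ∈ K(x) nonconstant. (a) If the order of G(f) equals deg f, then the extension K(f) ⊆ K(x) is normal. (b) Conversely, if the extension K(f) ⊆ K(x) is separable and normal, then the order of G(f) equals deg f. -/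
open Polynomial

section Aux

open Polynomial IntermediateField

variable {K : Type*} [Field K]

namespace RF

/-- Variable-swap endomorphism of `K[X][Y]`. -/
noncomputable def sw : K[X][X] →+* K[X][X] :=
  eval₂RingHom (mapRingHom (C : K →+* K[X])) (C X)

@[simp] lemma sw_C (a : K[X]) : sw (C a : K[X][X]) = a.map C := by simp [sw]
@[simp] lemma sw_X : sw (X : K[X][X]) = C X := by simp [sw]

lemma sw_comp : (sw : K[X][X] →+* K[X][X]).comp sw = RingHom.id _ := by
  apply ringHom_ext
  · intro a
    rw [RingHom.comp_apply, RingHom.id_apply]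
    have h : ((sw.comp sw).comp (C : K[X] →+* K[X][X])) = (C : K[X] →+* K[X][X]) := by
      apply ringHom_ext
      · intro b; simp [sw]
      · simp [sw]
    exact DFunLike.congr_fun h a
  · simp [sw]

@[simp] lemma sw_sw (P : K[X][X]) : sw (sw P) = P := DFunLike.congr_fun sw_comp P

/-- `sw` as a ring equivalence. -/
noncomputable def swE : K[X][X] ≃+* K[X][X] :=
  RingEquiv.ofRingHom sw sw sw_comp sw_comp

lemma irreducible_W (f : RatFunc K) :
    Irreducible (C f.denom * X - C f.num : K[X][X]) := by
  set W : K[X][X] := C f.denom * X - C f.num with hW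
  have hq : f.denom ≠ 0 := f.denom_ne_zero
  have hdeg : W.degree = 1 := by
    rw [hW, degree_sub_eq_left_of_degree_lt]
    · exact degree_C_mul_X (by simpa using hq)
    · rw [degree_C_mul_X (by simpa using hq)]
      exact lt_of_le_of_lt (degree_C_le) (by norm_num)
  have hco1 : W.coeff 1 = f.denom := by simp [hW, coeff_C]
  have hco0 : W.coeff 0 = -f.num := by simp [hW, coeff_C]
  have key : ∀ A : K[X][X], A ∣ W → A.natDegree = 0 → IsUnit A := by
    intro A hdvd hdeg0
    obtain ⟨a, rfl⟩ := natDegree_eq_zero.mp hdeg0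
    rw [C_dvd_iff_dvd_coeff] at hdvd
    have h1 : a ∣ f.denom := by have := hdvd 1; rwa [hco1] at this
    have h0 : a ∣ f.num := by have := hdvd 0; rw [hco0] at this; exact (dvd_neg.mp this)
    exact isUnit_C.mpr (f.isCoprime_num_denom.isUnit_of_dvd' h0 h1)
  have hW0 : W ≠ 0 := fun h => by simp [h] at hdeg
  constructor
  · intro h
    have := degree_eq_zero_of_isUnit h
    rw [hdeg] at this
    exact one_ne_zero this
  · intro A B hAB
    have hA0 : A ≠ 0 := fun h => hW0 (by simp [hAB, h])
    have hB0 : B ≠ 0 := fun h => hW0 (by simp [hAB, h])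
    have hd : A.natDegree + B.natDegree = 1 := by
      rw [← natDegree_mul hA0 hB0, ← hAB, natDegree_eq_of_degree_eq_some hdeg]
      rfl
    rcases Nat.eq_zero_or_pos A.natDegree with h | h
    · exact Or.inl (key A (Dvd.intro B hAB.symm) h)
    · exact Or.inr (key B (Dvd.intro_left A hAB.symm) (by omega))

/-- The polynomial `q(Y)·X - p(Y)` in `(K[Y])[X]`. -/
noncomputable def Pb (f : RatFunc K) : K[X][X] :=
  (f.denom.map C) * C X - f.num.map C

lemma sw_W (f : RatFunc K) : sw (C f.denom * X - C f.num : K[X][X]) = Pb f := by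
  simp [Pb]

lemma irreducible_Pb (f : RatFunc K) : Irreducible (Pb f) := by
  have h := (irreducible_W f).map (swE (K := K))
  rwa [show (swE (C f.denom * X - C f.num : K[X][X])) = Pb f from sw_W f] at h

lemma coeff_Pb (f : RatFunc K) (i : ℕ) :
    (Pb f).coeff i = C (f.denom.coeff i) * X - C (f.num.coeff i) := by
  simp [Pb, coeff_mul_C, coeff_map]

lemma lin_ne_zero {a b : K} (h : ¬(a = 0 ∧ b = 0)) : (C a * X - C b : K[X]) ≠ 0 := by
  intro h0
  rcases not_and_or.mp h with ha | hb
  · apply ha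
    have := congrArg (fun r => Polynomial.coeff r 1) h0
    simpa [coeff_C] using this
  · apply hb
    have := congrArg (fun r => Polynomial.coeff r 0) h0
    simpa [coeff_C] using this

lemma coeff_Pb_deg_ne_zero (f : RatFunc K) : (Pb f).coeff f.deg ≠ 0 := by
  rw [coeff_Pb]
  apply lin_ne_zero
  rintro ⟨hq, hp⟩
  by_cases h0 : f = 0
  · subst h0
    rw [RatFunc.denom_zero] at hq
    have hd0 : (0 : RatFunc K).deg = 0 := by
      simp [RatFunc.deg, RatFunc.num_zero, RatFunc.denom_zero]
    rw [hd0] at hq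
    simp at hq
  · rcases max_cases f.num.natDegree f.denom.natDegree with ⟨h1, -⟩ | ⟨h1, -⟩
    · exact (leadingCoeff_ne_zero.mpr (RatFunc.num_ne_zero h0)) (by rwa [leadingCoeff, ← h1])
    · exact (leadingCoeff_ne_zero.mpr f.denom_ne_zero) (by rwa [leadingCoeff, ← h1])

lemma Pb_ne_zero (f : RatFunc K) : Pb f ≠ 0 :=
  fun h => coeff_Pb_deg_ne_zero f (by simp [h])

lemma natDegree_Pb (f : RatFunc K) : (Pb f).natDegree = f.deg := by
  apply le_antisymm
  · rw [natDegree_le_iff_coeff_eq_zero]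
    intro m hm
    rw [coeff_Pb, coeff_eq_zero_of_natDegree_lt (lt_of_le_of_lt (le_max_right _ _) hm),
      coeff_eq_zero_of_natDegree_lt (lt_of_le_of_lt (le_max_left _ _) hm)]
    simp
  · exact le_natDegree_of_ne_zero (coeff_Pb_deg_ne_zero f)

lemma isPrimitive_Pb (f : RatFunc K) (hf : 1 ≤ f.deg) : (Pb f).IsPrimitive := by
  intro r hr
  obtain ⟨s, hs⟩ := hr
  rcases (irreducible_Pb f).isUnit_or_isUnit hs with h | h
  · exact isUnit_C.mp h
  · exfalso
    have hC0 : (C r : K[X][X]) ≠ 0 := fun hc => Pb_ne_zero f (by rw [hs, hc, zero_mul])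
    have hs0 : s ≠ 0 := h.ne_zero
    have h1 : (Pb f).natDegree = 0 := by
      rw [hs, natDegree_mul hC0 hs0, natDegree_C, natDegree_eq_zero_of_isUnit h]
    rw [natDegree_Pb] at h1
    omega


lemma aeval_X_ratfunc (g : K[X]) :
    Polynomial.aeval (RatFunc.X : RatFunc K) g = algebraMap K[X] (RatFunc K) g := by
  have h := Polynomial.aeval_algHom (IsScalarTower.toAlgHom K K[X] (RatFunc K)) X
  have h2 := DFunLike.congr_fun h g
  simp only [AlgHom.coe_comp, Function.comp_apply, aeval_X_left_apply,
    IsScalarTower.coe_toAlgHom'] at h2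
  rwa [RatFunc.algebraMap_X] at h2

lemma transcendental_X : Transcendental K (RatFunc.X : RatFunc K) := by
  rw [transcendental_iff]
  intro g hg
  rw [aeval_X_ratfunc] at hg
  exact RatFunc.algebraMap_injective K (by simpa using hg)

lemma adjoin_ratfuncX_top (L : IntermediateField K (RatFunc K)) :
    IntermediateField.adjoin L {(RatFunc.X : RatFunc K)} = ⊤ := by
  rw [eq_top_iff]
  intro g _
  have hX : (RatFunc.X : RatFunc K) ∈ adjoin L {(RatFunc.X : RatFunc K)} :=
    subset_adjoin _ _ rfl
  have hpoly : ∀ h : K[X], algebraMap K[X] (RatFunc K) h ∈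
      adjoin L {(RatFunc.X : RatFunc K)} := by
    intro h
    induction h using Polynomial.induction_on with
    | C a =>
      have he : algebraMap K[X] (RatFunc K) (C a) = algebraMap ↥L (RatFunc K) (algebraMap K ↥L a) := by
        rw [← IsScalarTower.algebraMap_apply K ↥L (RatFunc K),
          IsScalarTower.algebraMap_apply K K[X] (RatFunc K), Polynomial.algebraMap_eq]
      rw [he]
      exact (adjoin L {(RatFunc.X : RatFunc K)}).algebraMap_mem _
    | add p q hp hq => rw [map_add]; exact add_mem hp hq
    | monomial n a ih =>
      rw [pow_succ, ← mul_assoc, map_mul, RatFunc.algebraMap_X]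
      exact mul_mem ih hX
  rw [← RatFunc.num_div_denom g]
  exact div_mem (hpoly _) (hpoly _)


lemma f_not_const (f : RatFunc K) (hf : 1 ≤ f.deg) (c : K) :
    f ≠ algebraMap K (RatFunc K) c := by
  intro h
  have h2 : f = algebraMap K[X] (RatFunc K) (C c) := by
    rw [h, IsScalarTower.algebraMap_apply K K[X] (RatFunc K), Polynomial.algebraMap_eq]
  have hnum : f.num = C c := by rw [h2, RatFunc.num_algebraMap]
  have hden : f.denom = 1 := by rw [h2, RatFunc.denom_algebraMap]
  have hd : f.deg = 0 := by
    simp [RatFunc.deg, hnum, hden]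
  omega

theorem findim_and_finrank (f : RatFunc K) (hf : 1 ≤ f.deg) :
    FiniteDimensional (adjoin K {f}) (RatFunc K) ∧
      Module.finrank (adjoin K {f}) (RatFunc K) = f.deg := by
  classical
  set L := adjoin K {f} with hL
  have hfL : f ∈ L := subset_adjoin _ _ rfl
  set f' : L := ⟨f, hfL⟩ with hf'
  set θ : K[X] →ₐ[K] L := Polynomial.aeval f' with hθ
  have hθval : ∀ g : K[X], (algebraMap L (RatFunc K)) (θ g) = Polynomial.aeval f g := by
    intro g
    calc (algebraMap L (RatFunc K)) (θ g) = L.val (θ g) := rfl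
    _ = Polynomial.aeval (L.val f') g :=
        (DFunLike.congr_fun (Polynomial.aeval_algHom (L.val) f') g).symm
    _ = Polynomial.aeval f g := rfl
  set x : RatFunc K := RatFunc.X with hx
  set Pl : Polynomial L := (Pb f).map (θ : K[X] →+* L) with hPl
  have hcomp : ((algebraMap L (RatFunc K)).comp (θ : K[X] →+* L))
      = ((Polynomial.aeval f : K[X] →ₐ[K] RatFunc K) : K[X] →+* RatFunc K) :=
    RingHom.ext hθval
  have hden : algebraMap K[X] (RatFunc K) f.denom ≠ 0 :=
    RatFunc.algebraMap_ne_zero f.denom_ne_zero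
  have haevalPl : Polynomial.aeval x Pl = 0 := by
    rw [hPl, Polynomial.aeval_def, Polynomial.eval₂_map, hcomp]
    have hC : (((Polynomial.aeval f : K[X] →ₐ[K] RatFunc K) : K[X] →+* RatFunc K)).comp
        (C : K →+* K[X]) = algebraMap K (RatFunc K) := by
      ext c; simp
    have hq' : ∀ h : K[X], eval₂ (algebraMap K (RatFunc K)) x h = algebraMap K[X] (RatFunc K) h := by
      intro h
      rw [← Polynomial.aeval_def, hx, aeval_X_ratfunc]
    rw [Pb, eval₂_sub, eval₂_mul, eval₂_C, Polynomial.eval₂_map, hC,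
      Polynomial.eval₂_map, hC, hq', hq']
    show algebraMap K[X] (RatFunc K) f.denom * (Polynomial.aeval f) X
        - algebraMap K[X] (RatFunc K) f.num = 0
    rw [Polynomial.aeval_X, sub_eq_zero, mul_comm]
    exact ((div_eq_iff hden).mp (RatFunc.num_div_denom f)).symm
  have hPl0 : Pl ≠ 0 := by
    intro h0
    have hc : Pl.coeff f.deg = 0 := by rw [h0]; simp
    rw [hPl, Polynomial.coeff_map] at hc
    have hc2 : (algebraMap L (RatFunc K)) ((θ : K[X] →+* L) ((Pb f).coeff f.deg)) = 0 := by
      rw [hc]; simp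
    rw [show ((θ : K[X] →+* L) ((Pb f).coeff f.deg)) = θ ((Pb f).coeff f.deg) from rfl,
      hθval, coeff_Pb] at hc2
    rw [map_sub, map_mul, Polynomial.aeval_C, Polynomial.aeval_C, Polynomial.aeval_X,
      sub_eq_zero] at hc2
    by_cases hq0 : f.denom.coeff f.deg = 0
    · rw [hq0, map_zero, zero_mul] at hc2
      have hp0 : f.num.coeff f.deg = 0 := by
        have h5 := hc2.symm
        rwa [map_eq_zero_iff _ (algebraMap K (RatFunc K)).injective] at h5
      exact coeff_Pb_deg_ne_zero f (by rw [coeff_Pb, hq0, hp0]; simp)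
    · refine f_not_const f hf (f.num.coeff f.deg * (f.denom.coeff f.deg)⁻¹) ?_
      have hu : algebraMap K (RatFunc K) (f.denom.coeff f.deg) ≠ 0 := fun h =>
        hq0 ((algebraMap K (RatFunc K)).injective (by rw [h, map_zero]))
      rw [map_mul, map_inv₀, ← div_eq_mul_inv]
      rw [mul_comm] at hc2
      exact (eq_div_iff hu).mpr hc2
  have hxint : IsIntegral L x := isAlgebraic_iff_isIntegral.mp ⟨Pl, hPl0, haevalPl⟩
  have htop : IntermediateField.adjoin L {x} = ⊤ := adjoin_ratfuncX_top L
  have hFD : FiniteDimensional L (RatFunc K) := by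
    have h1 := IntermediateField.adjoin.finiteDimensional hxint
    rw [htop] at h1
    exact (IntermediateField.topEquiv (F := L) (E := RatFunc K)).toLinearEquiv.finiteDimensional
  have htrf : Transcendental K f := by
    intro halg
    have hint : IsIntegral K f := halg.isIntegral
    have hFDL : FiniteDimensional K L := IntermediateField.adjoin.finiteDimensional hint
    have : FiniteDimensional K (RatFunc K) := FiniteDimensional.trans K L (RatFunc K)
    exact transcendental_X (K := K) (IsIntegral.isAlgebraic (IsIntegral.of_finite K RatFunc.X))
  have hθinj : Function.Injective (θ : K[X] →+* L) := by
    intro a b hab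
    have h2 : Polynomial.aeval f a = Polynomial.aeval f b := by
      rw [← hθval, ← hθval]
      exact congrArg _ hab
    have h3 : Polynomial.aeval f (a - b) = 0 := by rw [map_sub, h2, sub_self]
    exact sub_eq_zero.mp ((transcendental_iff.mp htrf) _ h3)
  have hirrPm : Irreducible ((Pb f).map (algebraMap K[X] (RatFunc K))) :=
    ((isPrimitive_Pb f hf).irreducible_iff_irreducible_map_fraction_map).mp (irreducible_Pb f)
  set χ : RatFunc K →+* L := IsFractionRing.lift hθinj with hχdef
  have hχalg : ∀ g : K[X], χ (algebraMap K[X] (RatFunc K) g) = θ g := fun g =>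
    IsFractionRing.lift_algebraMap hθinj g
  set ψr : RatFunc K →+* RatFunc K := (algebraMap L (RatFunc K)).comp χ with hψr
  have hψcomm : ∀ c : K, ψr (algebraMap K (RatFunc K) c) = algebraMap K (RatFunc K) c := by
    intro c
    rw [hψr, RingHom.comp_apply, IsScalarTower.algebraMap_apply K K[X] (RatFunc K),
      Polynomial.algebraMap_eq, hχalg, hθval, Polynomial.aeval_C,
      ← Polynomial.algebraMap_eq, ← IsScalarTower.algebraMap_apply]
  set ψ : RatFunc K →ₐ[K] RatFunc K := { toRingHom := ψr, commutes' := hψcomm } with hψ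
  have hrange : L ≤ ψ.fieldRange := by
    rw [hL, adjoin_le_iff]
    intro z hz
    rw [Set.mem_singleton_iff] at hz
    subst hz
    refine ⟨RatFunc.X, ?_⟩
    show ψr RatFunc.X = z
    rw [hψr, RingHom.comp_apply, ← RatFunc.algebraMap_X (K := K), hχalg, hθval,
      Polynomial.aeval_X]
  have hχsurj : Function.Surjective χ := by
    intro y
    obtain ⟨z, hz⟩ := hrange y.2
    refine ⟨z, Subtype.ext ?_⟩
    rw [← hz]
    rfl
  set e : RatFunc K ≃+* L := RingEquiv.ofBijective χ ⟨χ.injective, hχsurj⟩ with he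
  have hPlm : ((Pb f).map (algebraMap K[X] (RatFunc K))).map (e : RatFunc K →+* L) = Pl := by
    rw [Polynomial.map_map]
    have hce : ((e : RatFunc K →+* L).comp (algebraMap K[X] (RatFunc K)))
        = (θ : K[X] →+* L) := RingHom.ext fun g => hχalg g
    rw [hce, hPl]
  have hirrPl : Irreducible Pl := by
    rw [← hPlm]
    have := hirrPm.map (Polynomial.mapEquiv e)
    rwa [Polynomial.mapEquiv_apply] at this
  have hmin := minpoly.eq_of_irreducible hirrPl haevalPl
  have hlc : Pl.leadingCoeff ≠ 0 := leadingCoeff_ne_zero.mpr hPl0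
  have hndeg : (minpoly L x).natDegree = f.deg := by
    rw [← hmin, natDegree_mul_C (inv_ne_zero hlc), hPl,
      natDegree_map_eq_of_injective hθinj, natDegree_Pb]
  refine ⟨hFD, ?_⟩
  have h1 := IntermediateField.adjoin.finrank hxint
  rw [htop] at h1
  rw [← (IntermediateField.topEquiv (F := L) (E := RatFunc K)).toLinearEquiv.finrank_eq,
    h1, hndeg]


end RF

namespace RF

lemma stabilizer_eq_fixingSubgroup (f : RatFunc K) :
    MulAction.stabilizer (RatFunc K ≃ₐ[K] RatFunc K) f
      = (adjoin K {f}).fixingSubgroup := by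
  ext σ
  rw [MulAction.mem_stabilizer_iff, IntermediateField.mem_fixingSubgroup_iff]
  constructor
  · intro hσ y hy
    have hσs : Subgroup.zpowers σ ≤ MulAction.stabilizer (RatFunc K ≃ₐ[K] RatFunc K) f :=
      Subgroup.zpowers_le.mpr hσ
    have hle : adjoin K {f} ≤ IntermediateField.fixedField (Subgroup.zpowers σ) := by
      rw [adjoin_le_iff]
      intro z hz
      rw [Set.mem_singleton_iff] at hz
      subst hz
      intro g
      exact hσs g.2
    exact hle hy ⟨σ, Subgroup.mem_zpowers σ⟩
  · intro h
    exact h f (subset_adjoin _ _ rfl)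

end RF

end Aux

/-- (a) If the order of the fixing group of `f` equals `deg f`, then `K(f) ⊆ K(x)` is a
normal extension; (b) conversely, if `K(f) ⊆ K(x)` is separable and normal, then the
order of the fixing group of `f` equals `deg f`. -/
theorem card_fixingGroup_eq_deg_iff_normal {K : Type*} [Field K]
    (f : RatFunc K) (hf : 1 ≤ f.deg) :
    (Nat.card (MulAction.stabilizer (RatFunc K ≃ₐ[K] RatFunc K) f) = f.deg →
      Normal (IntermediateField.adjoin K {f}) (RatFunc K)) ∧
    (Algebra.IsSeparable (IntermediateField.adjoin K {f}) (RatFunc K) →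
      Normal (IntermediateField.adjoin K {f}) (RatFunc K) →
      Nat.card (MulAction.stabilizer (RatFunc K ≃ₐ[K] RatFunc K) f) = f.deg) := by
  obtain ⟨hFD, hrank⟩ := RF.findim_and_finrank f hf
  set L := IntermediateField.adjoin K {f} with hL
  have hcard : Nat.card (MulAction.stabilizer (RatFunc K ≃ₐ[K] RatFunc K) f)
      = Nat.card (RatFunc K ≃ₐ[L] RatFunc K) := by
    rw [RF.stabilizer_eq_fixingSubgroup f]
    exact Nat.card_congr (IntermediateField.fixingSubgroupEquiv L).toEquiv
  letI : Fintype (RatFunc K ≃ₐ[L] RatFunc K) := AlgEquiv.fintype L (RatFunc K)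
  have hcard2 : Nat.card (RatFunc K ≃ₐ[L] RatFunc K)
      = Fintype.card (RatFunc K ≃ₐ[L] RatFunc K) := Nat.card_eq_fintype_card
  constructor
  · intro h
    have hgal : IsGalois L (RatFunc K) := by
      apply IsGalois.of_card_aut_eq_finrank
      rw [← hcard, h, hrank]
    exact hgal.to_normal
  · intro hsep hnorm
    have hgal : IsGalois L (RatFunc K) := { to_isSeparable := hsep, to_normal := hnorm }
    rw [hcard, IsGalois.card_aut_eq_finrank, hrank]
end

section
/- Let K be a field and f ∈ K(x) indecomposable with deg f = p a prime number. Then the stabilizer G(f) is either the trivial subgroup or a cyclic group of order p. -/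
open Polynomial

set_option linter.unusedSectionVars false
set_option maxHeartbeats 1000000
namespace StabAux
variable {K : Type*} [Field K]

lemma algebraMap_eq_aeval_X (g : K[X]) :
    algebraMap K[X] (RatFunc K) g = aeval RatFunc.X g := by
  have h := Polynomial.aeval_algHom_apply (IsScalarTower.toAlgHom K K[X] (RatFunc K)) X g
  rw [IsScalarTower.coe_toAlgHom' K K[X] (RatFunc K)] at h
  rw [RatFunc.algebraMap_X] at h
  rw [Polynomial.aeval_X_left_apply] at h
  exact h.symm

lemma transcendental_X : Transcendental K (RatFunc.X : RatFunc K) := by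
  rw [transcendental_iff_injective]
  have : (aeval (RatFunc.X : RatFunc K) : K[X] →ₐ[K] RatFunc K) =
      (IsScalarTower.toAlgHom K K[X] (RatFunc K)) := by
    ext1
    rw [← algebraMap_eq_aeval_X]
    rfl
  rw [this]
  exact IsFractionRing.injective K[X] (RatFunc K)

noncomputable def RatFunc.deg' (f : RatFunc K) : ℕ := max f.num.natDegree f.denom.natDegree

section Deg
variable (f : RatFunc K) (hd : 2 ≤ max f.num.natDegree f.denom.natDegree)

include hd

lemma num_ne_zero' : f.num ≠ 0 := by
  intro h
  have hf : f = 0 := RatFunc.num_eq_zero_iff.mp h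
  rw [hf] at hd
  simp at hd

lemma not_const (c : K) : f ≠ algebraMap K (RatFunc K) c := by
  intro h
  have h2 : f = algebraMap K[X] (RatFunc K) (C c) := by
    rw [h, IsScalarTower.algebraMap_apply K K[X] (RatFunc K), Polynomial.algebraMap_eq]
  have hn : f.num = C c := by rw [h2, RatFunc.num_algebraMap]
  have hdn : f.denom = 1 := by rw [h2, RatFunc.denom_algebraMap]
  rw [hn, hdn] at hd
  simp [Polynomial.natDegree_C] at hd

end Deg

section Qgen

variable {F : Type*} [Field F] [Algebra K F] [Algebra F (RatFunc K)]
  [IsScalarTower K F (RatFunc K)]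

noncomputable def qgen (f : RatFunc K) (y : F) : F[X] :=
  f.num.map (algebraMap K F) - C y * f.denom.map (algebraMap K F)

lemma qgen_coeff (f : RatFunc K) (y : F) (i : ℕ) :
    (qgen f y).coeff i =
      algebraMap K F (f.num.coeff i) - y * algebraMap K F (f.denom.coeff i) := by
  simp [qgen, coeff_map]

lemma aeval_qgen (f : RatFunc K) (y : F) (hy : algebraMap F (RatFunc K) y = f) :
    aeval (RatFunc.X : RatFunc K) (qgen f y) = 0 := by
  have h1 : ∀ g : K[X], aeval (RatFunc.X : RatFunc K) (g.map (algebraMap K F)) =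
      algebraMap K[X] (RatFunc K) g := by
    intro g
    rw [aeval_map_algebraMap, ← algebraMap_eq_aeval_X]
  have hd0 : algebraMap K[X] (RatFunc K) f.denom ≠ 0 :=
    RatFunc.algebraMap_ne_zero (RatFunc.denom_ne_zero f)
  simp only [qgen, map_sub, map_mul, aeval_C, h1, hy]
  nth_rewrite 2 [← RatFunc.num_div_denom f]
  rw [div_mul_cancel₀ _ hd0, sub_self]

lemma qgen_coeff_deg_ne_zero (f : RatFunc K)
    (hd : 2 ≤ max f.num.natDegree f.denom.natDegree)
    (y : F) (hy : algebraMap F (RatFunc K) y = f) :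
    (qgen f y).coeff (max f.num.natDegree f.denom.natDegree) ≠ 0 := by
  set N := max f.num.natDegree f.denom.natDegree with hN
  intro h
  rw [qgen_coeff] at h
  have hinjKF : Function.Injective (algebraMap K F) := (algebraMap K F).injective
  by_cases hden : f.denom.coeff N = 0
  · -- then numerator coefficient at N must be nonzero
    have hnum : f.num.coeff N ≠ 0 := by
      have hnn : f.num.natDegree = N := by
        rcases max_choice f.num.natDegree f.denom.natDegree with hc | hc
        · rw [hN, hc]
        · exfalso
          have hlc : f.denom.leadingCoeff = 0 := by
            rw [Polynomial.leadingCoeff, ← hc, ← hN]; exact hden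
          exact RatFunc.denom_ne_zero f (leadingCoeff_eq_zero.mp hlc)
      intro h0
      have hlc : f.num.leadingCoeff = 0 := by
        rw [Polynomial.leadingCoeff, hnn]; exact h0
      exact num_ne_zero' f hd (leadingCoeff_eq_zero.mp hlc)
    rw [hden, map_zero, mul_zero, sub_zero] at h
    exact hnum (hinjKF (by rw [h, map_zero]))
  · -- y would be a constant
    have hd0 : algebraMap K F (f.denom.coeff N) ≠ 0 := fun hc =>
      hden (hinjKF (by rw [hc, map_zero]))
    set c := f.num.coeff N / f.denom.coeff N with hc
    have hyc : y = algebraMap K F c := by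
      rw [hc, map_div₀, eq_div_iff hd0]
      rw [sub_eq_zero] at h
      exact h.symm
    apply not_const f hd c
    rw [← hy, hyc]
    exact (IsScalarTower.algebraMap_apply K F (RatFunc K) c).symm

lemma natDegree_qgen (f : RatFunc K)
    (hd : 2 ≤ max f.num.natDegree f.denom.natDegree)
    (y : F) (hy : algebraMap F (RatFunc K) y = f) :
    (qgen f y).natDegree = max f.num.natDegree f.denom.natDegree := by
  set N := max f.num.natDegree f.denom.natDegree with hN
  have hle : (qgen f y).natDegree ≤ N := by
    rw [natDegree_le_iff_coeff_eq_zero]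
    intro m hm
    rw [qgen_coeff, coeff_eq_zero_of_natDegree_lt (lt_of_le_of_lt (le_max_left _ _) hm),
      coeff_eq_zero_of_natDegree_lt (lt_of_le_of_lt (le_max_right _ _) hm)]
    simp
  have hge : N ≤ (qgen f y).natDegree :=
    le_natDegree_of_ne_zero (qgen_coeff_deg_ne_zero f hd y hy)
  omega

lemma qgen_ne_zero (f : RatFunc K)
    (hd : 2 ≤ max f.num.natDegree f.denom.natDegree)
    (y : F) (hy : algebraMap F (RatFunc K) y = f) : qgen f y ≠ 0 := fun h =>
  qgen_coeff_deg_ne_zero f hd y hy (by rw [h]; simp)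

end Qgen

lemma transcendental_f (f : RatFunc K)
    (hd : 2 ≤ max f.num.natDegree f.denom.natDegree) : Transcendental K f := by
  intro halg
  set F₀ := IntermediateField.adjoin K {f} with hF₀
  have hy : algebraMap F₀ (RatFunc K) (IntermediateField.AdjoinSimple.gen K f) = f :=
    IntermediateField.AdjoinSimple.algebraMap_gen K f
  have hX : IsIntegral F₀ (RatFunc.X : RatFunc K) :=
    (IsAlgebraic.isIntegral ⟨qgen f _, qgen_ne_zero f hd _ hy, aeval_qgen f _ hy⟩)
  have hFD : FiniteDimensional K F₀ :=
    IntermediateField.adjoin.finiteDimensional halg.isIntegral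
  have : Algebra.IsIntegral K F₀ := Algebra.IsIntegral.of_finite K F₀
  exact transcendental_X ((isIntegral_trans _ hX).isAlgebraic)

section Swap

/-- The ring hom `K[X][Y] → K[X][Y]` swapping the two variables. -/
noncomputable def swapHom : K[X][X] →+* K[X][X] :=
  eval₂RingHom (mapRingHom (C : K →+* K[X])) (C X)

lemma swapHom_C (g : K[X]) : swapHom (C g : K[X][X]) = g.map (C : K →+* K[X]) := by
  simp [swapHom]

lemma swapHom_X : swapHom (X : K[X][X]) = C X := by simp [swapHom]

lemma swapHom_swapHom : (swapHom : K[X][X] →+* K[X][X]).comp swapHom = RingHom.id _ := by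
  apply Polynomial.ringHom_ext'
  · apply Polynomial.ringHom_ext'
    · ext c
      simp [swapHom]
    · show swapHom (swapHom (C X)) = C X
      rw [swapHom_C]
      simp only [map_X]
      rw [swapHom_X]
  · show swapHom (swapHom X) = X
    rw [swapHom_X, swapHom_C]
    simp

/-- Variable swap as ring equivalence. -/
noncomputable def swapEquiv : K[X][X] ≃+* K[X][X] :=
  RingEquiv.ofRingHom swapHom swapHom swapHom_swapHom swapHom_swapHom

end Swap

section Irred

variable (f : RatFunc K) (hd : 2 ≤ max f.num.natDegree f.denom.natDegree)

/-- `num(T) - Y * denom(T)` as an element of `K[Y][T]`  (outer variable `T`). -/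
noncomputable def Ppoly (f : RatFunc K) : K[X][X] :=
  f.num.map (C : K →+* K[X]) - C X * f.denom.map (C : K →+* K[X])

/-- `num - Y * denom` as an element of `K[T][Y]` (outer variable `Y`, degree 1). -/
noncomputable def Qpoly (f : RatFunc K) : K[X][X] := C (-f.denom) * X + C f.num

lemma Ppoly_coeff' (f : RatFunc K) (i : ℕ) :
    (Ppoly f).coeff i = C (f.num.coeff i) - X * C (f.denom.coeff i) := by
  simp [Ppoly, coeff_map]

lemma swapEquiv_Qpoly (f : RatFunc K) : (swapEquiv (Qpoly f) : K[X][X]) = Ppoly f := by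
  show swapHom (C (-f.denom) * X + C f.num) = _
  rw [map_add, map_mul, swapHom_C, swapHom_C, swapHom_X, Ppoly]
  rw [Polynomial.map_neg]
  ring

include hd

lemma num_ne_zero'' : f.num ≠ 0 := num_ne_zero' f hd

lemma Qpoly_irreducible : Irreducible (Qpoly f) := by
  have hden : f.denom ≠ 0 := RatFunc.denom_ne_zero f
  have hnd : (Qpoly f).natDegree = 1 := natDegree_linear (neg_ne_zero.mpr hden)
  constructor
  · exact not_isUnit_of_natDegree_pos _ (by omega)
  · intro a b hab
    have hQ0 : Qpoly f ≠ 0 := fun h => by simp [h] at hnd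
    have ha0 : a ≠ 0 := fun h => hQ0 (by rw [hab, h, zero_mul])
    have hb0 : b ≠ 0 := fun h => hQ0 (by rw [hab, h, mul_zero])
    have hsum : a.natDegree + b.natDegree = 1 := by
      rw [← natDegree_mul ha0 hb0, ← hab, hnd]
    have hcoeff0 : (Qpoly f).coeff 0 = f.num := by simp [Qpoly]
    have hcoeff1 : (Qpoly f).coeff 1 = -f.denom := by
      simp [Qpoly, coeff_C_mul, coeff_X]
    have key : ∀ c : K[X][X], c.natDegree = 0 → c ∣ Qpoly f → IsUnit c := by
      intro c hc hdvd
      obtain ⟨c0, rfl⟩ : ∃ c0, c = C c0 := ⟨c.coeff 0, eq_C_of_natDegree_eq_zero hc⟩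
      have hdc := (C_dvd_iff_dvd_coeff c0 (Qpoly f)).mp hdvd
      have h1 := hdc 0
      have h2 := hdc 1
      rw [hcoeff0] at h1
      rw [hcoeff1] at h2
      rw [isUnit_C]
      exact (RatFunc.isCoprime_num_denom f).symm.isUnit_of_dvd' (dvd_neg.mp h2) h1
    rcases Nat.add_eq_one_iff.mp hsum with ⟨ha, hb⟩ | ⟨ha, hb⟩
    · exact Or.inl (key a ha (Dvd.intro _ hab.symm))
    · exact Or.inr (key b hb (Dvd.intro_left _ hab.symm))

lemma Ppoly_irreducible : Irreducible (Ppoly f) := by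
  rw [← swapEquiv_Qpoly]
  exact (MulEquiv.irreducible_iff (swapEquiv : K[X][X] ≃+* K[X][X])).mpr
    (Qpoly_irreducible f hd)

lemma Ppoly_primitive : (Ppoly f).IsPrimitive := by
  have hden : f.denom ≠ 0 := RatFunc.denom_ne_zero f
  have hcop := RatFunc.isCoprime_num_denom f
  intro d hdvd
  have hdc := (C_dvd_iff_dvd_coeff d (Ppoly f)).mp hdvd
  have hd0 : f.denom.coeff f.denom.natDegree ≠ 0 :=
    fun h => hden (leadingCoeff_eq_zero.mp h)
  have hgi0 : ((Ppoly f).coeff f.denom.natDegree) =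
      C (-(f.denom.coeff f.denom.natDegree)) * X + C (f.num.coeff f.denom.natDegree) := by
    rw [Ppoly_coeff', map_neg]
    ring
  have hnd1 : ((Ppoly f).coeff f.denom.natDegree).natDegree = 1 := by
    rw [hgi0]; exact natDegree_linear (neg_ne_zero.mpr hd0)
  have hgne : (Ppoly f).coeff f.denom.natDegree ≠ 0 := fun h => by simp [h] at hnd1
  have hdne : d ≠ 0 := fun h => hgne (zero_dvd_iff.mp (h ▸ hdc f.denom.natDegree))
  have hdle : d.natDegree ≤ 1 :=
    le_trans (natDegree_le_of_dvd (hdc f.denom.natDegree) hgne) (le_of_eq hnd1)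
  rcases Nat.le_one_iff_eq_zero_or_eq_one.mp hdle with hd1 | hd1
  · -- degree 0 : unit
    obtain ⟨c0, rfl⟩ : ∃ c0, d = C c0 := ⟨d.coeff 0, eq_C_of_natDegree_eq_zero hd1⟩
    have : c0 ≠ 0 := fun h => hdne (by rw [h, map_zero])
    exact isUnit_C.mpr (isUnit_iff_ne_zero.mpr this)
  · -- degree 1 : contradiction
    exfalso
    have hb1 : d.coeff 1 ≠ 0 := by
      intro h
      have : d.leadingCoeff = 0 := by rw [Polynomial.leadingCoeff, hd1]; exact h
      exact hdne (leadingCoeff_eq_zero.mp this)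
    have hlam : ∀ i : ℕ, d.coeff 1 * f.num.coeff i = -(d.coeff 0 * f.denom.coeff i) := by
      intro i
      obtain ⟨qi, hqi⟩ := hdc i
      have hgilin : ((Ppoly f).coeff i).natDegree ≤ 1 := by
        rw [Ppoly_coeff']
        refine le_trans (natDegree_sub_le _ _) ?_
        simp only [natDegree_C, max_le_iff]
        exact ⟨Nat.zero_le _, le_trans natDegree_mul_le (by simp)⟩
      have hqideg : qi.natDegree = 0 := by
        by_cases hqi0 : qi = 0
        · simp [hqi0]
        · have := natDegree_mul hdne hqi0
          rw [← hqi] at this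
          omega
      obtain ⟨l, rfl⟩ : ∃ l, qi = C l := ⟨qi.coeff 0, eq_C_of_natDegree_eq_zero hqideg⟩
      have hc0 : f.num.coeff i = d.coeff 0 * l := by
        have h0 := congrArg (fun p : K[X] => p.coeff 0) hqi
        simpa [Ppoly_coeff', coeff_mul_C] using h0
      have hc1 : -(f.denom.coeff i) = d.coeff 1 * l := by
        have h1 := congrArg (fun p : K[X] => p.coeff 1) hqi
        simpa [Ppoly_coeff', coeff_mul_C] using h1
      rw [hc0, ← mul_assoc, mul_comm (d.coeff 1) (d.coeff 0), mul_assoc, ← hc1]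
      ring
    have heq : C (d.coeff 1) * f.num = C (-(d.coeff 0)) * f.denom := by
      ext i
      simp only [coeff_C_mul, hlam i]
      ring
    -- denominator has degree 0
    have hCd1 : (C (d.coeff 1) : K[X]) ≠ 0 := fun h => hb1 (by
      simpa using congrArg (fun p : K[X] => p.coeff 0) h)
    have hdvd1 : f.denom ∣ C (d.coeff 1) * f.num := by
      rw [heq]; exact dvd_mul_left _ _
    have hden0 : f.denom.natDegree = 0 := by
      have := natDegree_le_of_dvd (hcop.symm.dvd_of_dvd_mul_right hdvd1) hCd1
      simpa using this
    by_cases hb0 : d.coeff 0 = 0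
    · -- numerator is zero
      apply num_ne_zero' f hd
      ext i
      have := hlam i
      rw [hb0, zero_mul, neg_zero] at this
      rcases mul_eq_zero.mp this with h | h
      · exact absurd h hb1
      · simpa using h
    · have hCd0 : (C (-(d.coeff 0)) : K[X]) ≠ 0 := fun h => hb0 (by
        have := congrArg (fun p : K[X] => p.coeff 0) h
        simpa using this)
      have hdvd2 : f.num ∣ C (-(d.coeff 0)) * f.denom := by
        rw [← heq]; exact dvd_mul_left _ _
      have hnum0 : f.num.natDegree = 0 := by
        have := natDegree_le_of_dvd (hcop.dvd_of_dvd_mul_right hdvd2) hCd0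
        simpa using this
      omega

end Irred

section Main

variable (f : RatFunc K)

/-- The embedding `K(x) → K(x)` sending `x` to `f`. -/
noncomputable def psi (htr : Transcendental K f) : RatFunc K →ₐ[K] RatFunc K :=
  RatFunc.liftAlgHom (aeval f)
    (nonZeroDivisors_le_comap_nonZeroDivisors_of_injective _
      (transcendental_iff_injective.mp htr))

lemma psi_algebraMap (htr : Transcendental K f) (g : K[X]) :
    psi f htr (algebraMap K[X] (RatFunc K) g) = aeval f g := by
  have h := RatFunc.liftAlgHom_apply_div (φ := aeval f)
    (hφ := nonZeroDivisors_le_comap_nonZeroDivisors_of_injective _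
      (transcendental_iff_injective.mp htr)) g 1
  simpa [psi] using h

lemma psi_X (htr : Transcendental K f) : psi f htr RatFunc.X = f := by
  have := psi_algebraMap f htr X
  rw [RatFunc.algebraMap_X] at this
  simpa using this

lemma adjoin_X_top (F : IntermediateField K (RatFunc K)) :
    IntermediateField.adjoin F {(RatFunc.X : RatFunc K)} = ⊤ := by
  rw [eq_top_iff]
  intro r _
  have hXmem : (RatFunc.X : RatFunc K) ∈ IntermediateField.adjoin F {(RatFunc.X : RatFunc K)} :=
    IntermediateField.subset_adjoin _ _ (Set.mem_singleton _)
  have hg : ∀ g : K[X], algebraMap K[X] (RatFunc K) g ∈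
      IntermediateField.adjoin F {(RatFunc.X : RatFunc K)} := by
    intro g
    induction g using Polynomial.induction_on' with
    | add p q hp hq => rw [map_add]; exact add_mem hp hq
    | monomial n a =>
      rw [← C_mul_X_pow_eq_monomial, map_mul, map_pow]
      refine mul_mem ?_ (pow_mem hXmem n)
      have h3 : algebraMap K[X] (RatFunc K) (C a) = algebraMap K (RatFunc K) a := by
        rw [IsScalarTower.algebraMap_apply K K[X] (RatFunc K), Polynomial.algebraMap_eq]
      rw [h3, IsScalarTower.algebraMap_apply K F (RatFunc K)]
      exact (IntermediateField.adjoin _ _).algebraMap_mem _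
  rw [← RatFunc.num_div_denom r]
  exact div_mem (hg _) (hg _)

lemma finrank_of_min (F : IntermediateField K (RatFunc K))
    (hint : IsIntegral F (RatFunc.X : RatFunc K)) {N : ℕ}
    (hnd : (minpoly F (RatFunc.X : RatFunc K)).natDegree = N) :
    FiniteDimensional F (RatFunc K) ∧ Module.finrank F (RatFunc K) = N := by
  have htop := adjoin_X_top F
  have hFD : FiniteDimensional F
      (IntermediateField.adjoin F {(RatFunc.X : RatFunc K)}) :=
    IntermediateField.adjoin.finiteDimensional hint
  have hfr := IntermediateField.adjoin.finrank hint
  rw [htop] at hFD hfr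
  constructor
  · exact (IntermediateField.topEquiv (F := F)
      (E := RatFunc K)).toLinearEquiv.finiteDimensional
  · rw [← hnd, ← hfr]
    exact (IntermediateField.topEquiv (F := F)
      (E := RatFunc K)).toLinearEquiv.finrank_eq.symm

lemma main_finrank (hd : 2 ≤ max f.num.natDegree f.denom.natDegree) :
    ∃ F : IntermediateField K (RatFunc K),
      (∀ σ : RatFunc K ≃ₐ[K] RatFunc K, σ f = f → ∀ y ∈ F, σ y = y) ∧
      FiniteDimensional F (RatFunc K) ∧
      Module.finrank F (RatFunc K) = max f.num.natDegree f.denom.natDegree := by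
  classical
  have htr := transcendental_f f hd
  set ψ := psi f htr with hψ
  refine ⟨ψ.fieldRange, ?_, ?_⟩
  · -- fixed pointwise
    intro σ hσ y hy
    obtain ⟨r, rfl⟩ := hy
    have key : ∀ g : K[X], σ (aeval f g) = aeval f g := by
      intro g
      have h2 : aeval (σ f) g = σ (aeval f g) := Polynomial.aeval_algHom_apply σ.toAlgHom f g
      rw [hσ] at h2
      exact h2.symm
    have hr : ψ r = aeval f r.num / aeval f r.denom := RatFunc.liftAlgHom_apply _ _ _
    show σ (ψ r) = ψ r
    rw [hr, map_div₀, key, key]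
  let e : RatFunc K ≃ₐ[K] ψ.fieldRange := AlgEquiv.ofInjectiveField ψ
  have hecoe : ∀ r : RatFunc K, (e r : RatFunc K) = ψ r := fun r => rfl
  letI : Algebra K[X] ψ.fieldRange :=
    ((e : RatFunc K →+* ψ.fieldRange).comp (algebraMap K[X] (RatFunc K))).toAlgebra
  have halgdef : ∀ g : K[X],
      algebraMap K[X] ψ.fieldRange g = e (algebraMap K[X] (RatFunc K) g) := fun g => rfl
  letI e' : RatFunc K ≃ₐ[K[X]] ψ.fieldRange :=
    AlgEquiv.ofRingEquiv (f := e.toRingEquiv) (fun p => rfl)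
  letI : IsFractionRing K[X] ψ.fieldRange :=
    IsLocalization.isLocalization_of_algEquiv (nonZeroDivisors K[X]) e'
  -- the element f of the range
  set y₀ : ψ.fieldRange := ⟨f, ⟨RatFunc.X, psi_X f htr⟩⟩ with hy₀
  have hy : algebraMap ψ.fieldRange (RatFunc K) y₀ = f := rfl
  -- q = image of Ppoly
  have hmapX : algebraMap K[X] ψ.fieldRange X = y₀ := by
    apply Subtype.ext
    rw [halgdef]
    show (e (algebraMap K[X] (RatFunc K) X) : RatFunc K) = f
    rw [hecoe, RatFunc.algebraMap_X, psi_X]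
  have halgC : ∀ c : K, algebraMap K[X] ψ.fieldRange (C c) = algebraMap K ψ.fieldRange c := by
    intro c
    rw [halgdef]
    have h3 : algebraMap K[X] (RatFunc K) (C c) = algebraMap K (RatFunc K) c := by
      rw [IsScalarTower.algebraMap_apply K K[X] (RatFunc K), Polynomial.algebraMap_eq]
    rw [h3]
    exact e.commutes c
  have hmapC : (algebraMap K[X] ψ.fieldRange).comp (C : K →+* K[X]) =
      algebraMap K ψ.fieldRange := RingHom.ext halgC
  have hq : (Ppoly f).map (algebraMap K[X] ψ.fieldRange) = qgen f y₀ := by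
    rw [Ppoly, Polynomial.map_sub, Polynomial.map_mul, map_map, map_map, hmapC, map_C, hmapX]
    rfl
  have hqirr : Irreducible ((Ppoly f).map (algebraMap K[X] ψ.fieldRange)) :=
    ((Ppoly_primitive f hd).irreducible_iff_irreducible_map_fraction_map).mp
      (Ppoly_irreducible f hd)
  rw [hq] at hqirr
  have haev : aeval (RatFunc.X : RatFunc K) (qgen f y₀) = 0 := aeval_qgen f y₀ hy
  have hqne : qgen f y₀ ≠ 0 := qgen_ne_zero f hd y₀ hy
  have hint : IsIntegral ψ.fieldRange (RatFunc.X : RatFunc K) :=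
    IsAlgebraic.isIntegral ⟨qgen f y₀, hqne, haev⟩
  have hmin := minpoly.eq_of_irreducible hqirr haev
  have hminnd : (minpoly ψ.fieldRange (RatFunc.X : RatFunc K)).natDegree =
      max f.num.natDegree f.denom.natDegree := by
    have h1 := congrArg natDegree hmin
    rw [natDegree_mul_C (inv_ne_zero (leadingCoeff_ne_zero.mpr hqne))] at h1
    rw [← h1, natDegree_qgen f hd y₀ hy]
  exact ⟨(finrank_of_min ψ.fieldRange hint hminnd).1, (finrank_of_min ψ.fieldRange hint hminnd).2⟩

end Main

end StabAux

set_option linter.unusedVariables false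

/-- The fixing group of an indecomposable rational function of prime degree `p` is either
trivial or cyclic of order `p`. -/
theorem fixingGroup_of_indecomposable_prime_degree {K : Type*} [Field K]
    (f : RatFunc K) (p : ℕ) (hp : p.Prime) (hdeg : f.deg = p)
    (hind : ∀ g h : RatFunc K, f = g.comp h → g.deg = 1 ∨ h.deg = 1) :
    MulAction.stabilizer (RatFunc K ≃ₐ[K] RatFunc K) f = ⊥ ∨
      (IsCyclic (MulAction.stabilizer (RatFunc K ≃ₐ[K] RatFunc K) f) ∧
        Nat.card (MulAction.stabilizer (RatFunc K ≃ₐ[K] RatFunc K) f) = p) := by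
  classical
  have hdeg' : max f.num.natDegree f.denom.natDegree = p := hdeg
  have hd : 2 ≤ max f.num.natDegree f.denom.natDegree := by
    have := hp.two_le
    omega
  obtain ⟨F, hfix, hFD, hrank⟩ := StabAux.main_finrank f hd
  set G := MulAction.stabilizer (RatFunc K ≃ₐ[K] RatFunc K) f with hG
  have hmem : ∀ σ : RatFunc K ≃ₐ[K] RatFunc K, σ ∈ G → σ f = f := fun σ hσ => hσ
  have hfix' : ∀ (σ : G) (y : F),
      (σ : RatFunc K ≃ₐ[K] RatFunc K) (algebraMap F (RatFunc K) y) =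
        algebraMap F (RatFunc K) y :=
    fun σ y => hfix σ (hmem σ σ.2) y y.2
  let ρ : G → (RatFunc K ≃ₐ[F] RatFunc K) := fun σ =>
    AlgEquiv.ofRingEquiv (f := (σ : RatFunc K ≃ₐ[K] RatFunc K).toRingEquiv) (hfix' σ)
  let ρ' : G →* (RatFunc K ≃ₐ[F] RatFunc K) := MonoidHom.mk' ρ (by
    intro a b
    apply AlgEquiv.ext
    intro x
    rfl)
  have hinj : Function.Injective ρ' := by
    intro a b hab
    apply Subtype.ext
    apply AlgEquiv.ext
    intro x
    exact DFunLike.congr_fun hab x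
  have hGfin : Finite G := Finite.of_injective ρ' hinj
  set H := ρ'.range with hH
  have hcardGH : Nat.card G = Nat.card H :=
    Nat.card_congr (MonoidHom.ofInjective hinj).toEquiv
  have hart : Module.finrank (IntermediateField.fixedField H) (RatFunc K) = Nat.card H := by
    rw [IntermediateField.finrank_fixedField_eq_card, Nat.card_eq_fintype_card]
  have htower : Module.finrank F (IntermediateField.fixedField H) *
      Module.finrank (IntermediateField.fixedField H) (RatFunc K) =
      Module.finrank F (RatFunc K) :=
    Module.finrank_mul_finrank F (IntermediateField.fixedField H) (RatFunc K)
  have hkey : Module.finrank F (IntermediateField.fixedField H) * Nat.card H = p := by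
    rw [← hart, htower, hrank, hdeg']
  have hdvd : Nat.card H ∣ p := ⟨_, by rw [← hkey, mul_comm]⟩
  rcases (Nat.Prime.eq_one_or_self_of_dvd hp _ hdvd) with h1 | hP
  · left
    exact Subgroup.card_eq_one.mp (by rw [hcardGH, h1])
  · right
    have hcard : Nat.card G = p := by rw [hcardGH, hP]
    haveI := Fact.mk hp
    exact ⟨isCyclic_of_prime_card hcard, hcard⟩
end
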